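/- arXiv:2410.01489 — 7 statements merged into one kernel-verified Lean document; each statement's English description precedes it below -/
import Mathlib

section
/- Let (Ω,ρ) be a compact connected metric space, σ a Borel probability measure on Ω with full support, and U ⊆ Ω open and connected. Suppose u : U → [-∞,∞) is upper semi-continuous and there exists R > 0 such that for every closed ball B(x,r) ⊆ U with 0 < r < R we have u(x) ≤ (1/σ(B(x,r))) ∫_{B(x,r)} u dσ. If u attains its supremum over U at some point of U, then u is constant on U. -/
open MeasureTheory Metric Set ENNReal
open Topology Filter

/-- Map an extended real to an extended nonnegative real (negative values go to 0). -/
noncomputable def toe (x : EReal) : ℝ≥0∞ := if x = ⊤ then ⊤ else ENNReal.ofReal x.toReal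

/-- Integral of an `EReal`-valued function over a set, as difference of the
lower integrals of the positive and negative parts. -/
noncomputable def eInt {Ω : Type*} [MeasurableSpace Ω] (σ : Measure Ω) (s : Set Ω)
    (u : Ω → EReal) : EReal :=
  ((∫⁻ y in s, toe (u y) ∂σ : ℝ≥0∞) : EReal) - ((∫⁻ y in s, toe (-(u y)) ∂σ : ℝ≥0∞) : EReal)

lemma toe_measurable : Measurable toe := by
  exact Measurable.ite (measurableSet_eq) measurable_const
    (ENNReal.measurable_ofReal.comp measurable_ereal_toReal)

lemma toe_coe (a : ℝ) : toe (a : EReal) = ENNReal.ofReal a := by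
  simp [toe, EReal.coe_ne_top]

lemma toe_le_of_le {z : EReal} {a : ℝ} (h : z ≤ (a : EReal)) :
    toe z ≤ ENNReal.ofReal a := by
  induction z using EReal.rec with
  | bot => simp [toe]
  | coe c =>
      rw [toe_coe]
      exact ENNReal.ofReal_le_ofReal (EReal.coe_le_coe_iff.1 h)
  | top => exact absurd h (by simp)

lemma key_id (m c : ℝ) (h : c ≤ m) :
    ENNReal.ofReal m + ENNReal.ofReal (-c)
      = ENNReal.ofReal (m - c) + (ENNReal.ofReal (-m) + ENNReal.ofReal c) := by
  rcases le_total 0 c with hc | hc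
  · have hm : 0 ≤ m := hc.trans h
    rw [ENNReal.ofReal_eq_zero.2 (by linarith : -c ≤ 0),
      ENNReal.ofReal_eq_zero.2 (by linarith : -m ≤ 0), add_zero, zero_add,
      ← ENNReal.ofReal_add (by linarith) hc]
    ring_nf
  · rcases le_total 0 m with hm | hm
    · rw [ENNReal.ofReal_eq_zero.2 (by linarith : -m ≤ 0),
        ENNReal.ofReal_eq_zero.2 hc, zero_add, add_zero,
        ← ENNReal.ofReal_add hm (by linarith : (0:ℝ) ≤ -c)]
      ring_nf
    · rw [ENNReal.ofReal_eq_zero.2 hm, ENNReal.ofReal_eq_zero.2 hc, zero_add, add_zero,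
        ← ENNReal.ofReal_add (by linarith : (0:ℝ) ≤ m - c) (by linarith : (0:ℝ) ≤ -m)]
      ring_nf

lemma h_le_k (m : ℝ) (z : EReal) (hz : z ≤ (m : EReal)) :
    ENNReal.ofReal (-m) + toe z ≤ ENNReal.ofReal m + toe (-z) := by
  induction z using EReal.rec with
  | bot => simp [toe]
  | coe c =>
      have hcm : c ≤ m := EReal.coe_le_coe_iff.1 hz
      rw [← EReal.coe_neg, toe_coe, toe_coe, key_id m c hcm]
      exact le_add_self
  | top => exact absurd hz (by simp)

lemma usc_rel_open {Ω : Type*} [TopologicalSpace Ω] {u : Ω → EReal} {U : Set Ω}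
    (husc : UpperSemicontinuousOn u U) (c : EReal) :
    ∃ V : Set Ω, IsOpen V ∧ U ∩ {y | u y < c} = U ∩ V := by
  have h : ∀ y ∈ U ∩ {y | u y < c},
      ∃ t : Set Ω, IsOpen t ∧ y ∈ t ∧ t ∩ U ⊆ {z | u z < c} := by
    intro y hy
    have h' := husc y hy.1 c hy.2
    exact mem_nhdsWithin.1 h'
  choose! t ht hyt hsubt using h
  refine ⟨⋃ y ∈ U ∩ {y | u y < c}, t y, isOpen_biUnion fun y hy => ht y hy, ?_⟩
  ext z
  constructor
  · rintro ⟨hzU, hz⟩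
    exact ⟨hzU, mem_biUnion ⟨hzU, hz⟩ (hyt z ⟨hzU, hz⟩)⟩
  · rintro ⟨hzU, hz⟩
    obtain ⟨y, hy, hzt⟩ := mem_iUnion₂.1 hz
    exact ⟨hzU, hsubt y hy ⟨hzt, hzU⟩⟩

/-- Maximum principle for subharmonic functions on a compact connected metric space:
if `u` is upper semicontinuous, finite, and satisfies the submean value inequality with
radius `R` on an open connected `U`, and attains its supremum over `U` at a point of `U`,
then `u` is constant on `U`. -/
theorem maximum_principle
    {Ω : Type*} [MetricSpace Ω] [CompactSpace Ω] [ConnectedSpace Ω]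
    [MeasurableSpace Ω] [BorelSpace Ω]
    (σ : Measure Ω) [IsProbabilityMeasure σ]
    (hσfull : ∀ (x : Ω) (r : ℝ), 0 < r → 0 < σ (closedBall x r))
    (U : Set Ω) (hUopen : IsOpen U) (hUconn : IsConnected U)
    (u : Ω → EReal) (hfin : ∀ x ∈ U, u x ≠ ⊤)
    (husc : UpperSemicontinuousOn u U)
    (R : ℝ) (hR : 0 < R)
    (hsub : ∀ (x : Ω) (r : ℝ), 0 < r → r < R → closedBall x r ⊆ U →
      u x * ((σ (closedBall x r) : ℝ≥0∞) : EReal) ≤ eInt σ (closedBall x r) u)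
    (x₀ : Ω) (hx₀ : x₀ ∈ U) (hmax : ∀ x ∈ U, u x ≤ u x₀) :
    ∀ x ∈ U, u x = u x₀ := by
  classical
  by_cases hbot : u x₀ = ⊥
  · intro x hx
    have h := hmax x hx
    rw [hbot] at h ⊢
    exact le_bot_iff.1 h
  set M : EReal := u x₀ with hM
  have hMtop : M ≠ ⊤ := hfin x₀ hx₀
  set m : ℝ := M.toReal with hm
  have hMm : M = (m : EReal) := (EReal.coe_toReal hMtop hbot).symm
  -- the globally measurable modification of u
  set f : Ω → EReal := fun y => if y ∈ U then u y else ⊥ with hfdef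
  have hfu : ∀ y ∈ U, f y = u y := fun y hy => if_pos hy
  have hfmeas : Measurable f := by
    apply measurable_of_Iio
    intro c
    obtain ⟨V, hVopen, hVeq⟩ := usc_rel_open husc c
    have hViff : ∀ y, (y ∈ U ∧ u y < c) ↔ (y ∈ U ∧ y ∈ V) := fun y =>
      ⟨fun hy => Set.ext_iff.1 hVeq y |>.1 ⟨hy.1, hy.2⟩,
       fun hy => Set.ext_iff.1 hVeq y |>.2 ⟨hy.1, hy.2⟩⟩
    by_cases hc : (⊥ : EReal) < c
    · have heq : f ⁻¹' Iio c = (U ∩ V) ∪ Uᶜ := by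
        ext y
        by_cases hy : y ∈ U
        · simp only [mem_preimage, mem_Iio, hfdef, if_pos hy, mem_union, mem_inter_iff,
            mem_compl_iff, hy, not_true, or_false, true_and]
          exact ⟨fun h => ((hViff y).1 ⟨hy, h⟩).2, fun h => ((hViff y).2 ⟨hy, h⟩).2⟩
        · simp [hfdef, hy, hc]
      rw [heq]
      exact ((hUopen.inter hVopen).measurableSet).union hUopen.measurableSet.compl
    · have heq : f ⁻¹' Iio c = U ∩ V := by
        ext y
        by_cases hy : y ∈ U
        · simp only [mem_preimage, mem_Iio, hfdef, if_pos hy, mem_inter_iff, hy, true_and]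
          exact ⟨fun h => ((hViff y).1 ⟨hy, h⟩).2, fun h => ((hViff y).2 ⟨hy, h⟩).2⟩
        · simp [hfdef, hy, hc]
      rw [heq]
      exact (hUopen.inter hVopen).measurableSet
  -- the key local step
  have key : ∀ x ∈ U, u x = M → ∃ r > 0, ball x r ⊆ {y | y ∈ U ∧ u y = M} := by
    intro x hxU hux
    obtain ⟨ε, hε, hball⟩ := Metric.isOpen_iff.1 hUopen x hxU
    refine ⟨min (ε / 2) (R / 2), lt_min (by linarith) (by linarith), ?_⟩
    set r := min (ε / 2) (R / 2) with hrdef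
    have hr0 : 0 < r := lt_min (by linarith) (by linarith)
    have hrR : r < R := (min_le_right _ _).trans_lt (by linarith)
    have hBball : closedBall x r ⊆ ball x ε :=
      closedBall_subset_ball ((min_le_left _ _).trans_lt (by linarith))
    have hBU : closedBall x r ⊆ U := hBball.trans hball
    have hs := hsub x r hr0 hrR hBU
    set B := closedBall x r with hB
    have hBmeas : MeasurableSet B := measurableSet_closedBall
    have hσBne : σ B ≠ ⊤ := (lt_of_le_of_lt prob_le_one one_lt_top).ne
    -- replace u by f in the integrals
    have hcongr1 : (∫⁻ y in B, toe (u y) ∂σ) = ∫⁻ y in B, toe (f y) ∂σ :=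
      setLIntegral_congr_fun hBmeas
        (fun y hy => by simp only [hfu y (hBU hy)])
    have hcongr2 : (∫⁻ y in B, toe (-(u y)) ∂σ) = ∫⁻ y in B, toe (-(f y)) ∂σ :=
      setLIntegral_congr_fun hBmeas
        (fun y hy => by simp only [hfu y (hBU hy)])
    set A := ∫⁻ y in B, toe (f y) ∂σ with hA
    set Bn := ∫⁻ y in B, toe (-(f y)) ∂σ with hBn
    have hsB : u x * ((σ B : ℝ≥0∞) : EReal) ≤ (A : EReal) - (Bn : EReal) := by
      have he : eInt σ B u = (A : EReal) - (Bn : EReal) := by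
        rw [eInt, hcongr1, hcongr2]
      rw [← he]; exact hs
    have hfleB : ∀ y ∈ B, f y ≤ (m : EReal) := by
      intro y hy
      rw [hfu y (hBU hy)]
      exact (hmax y (hBU hy)).trans_eq hMm
    have hAle : A ≤ ENNReal.ofReal m * σ B := by
      calc A ≤ ∫⁻ _ in B, ENNReal.ofReal m ∂σ :=
            setLIntegral_mono' hBmeas fun y hy => toe_le_of_le (hfleB y hy)
        _ = ENNReal.ofReal m * σ B := setLIntegral_const B _
    have hAne : A ≠ ⊤ :=
      (hAle.trans_lt (mul_lt_top ofReal_lt_top (lt_of_le_of_lt prob_le_one one_lt_top))).ne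
    have hσcoe : ((σ B : ℝ≥0∞) : EReal) = (((σ B).toReal : ℝ) : EReal) := by
      rw [← EReal.toReal_coe_ennreal (x := σ B)]
      exact (EReal.coe_toReal (by simp [hσBne]) (EReal.coe_ennreal_ne_bot _)).symm
    have hux' : u x = (m : EReal) := hux.trans hMm
    have hBnne : Bn ≠ ⊤ := by
      intro h
      rw [h, EReal.coe_ennreal_top, EReal.sub_top] at hsB
      rw [hux', hσcoe, ← EReal.coe_mul] at hsB
      exact absurd (le_bot_iff.1 hsB) (EReal.coe_ne_bot _)
    have hAcoe : (A : EReal) = ((A.toReal : ℝ) : EReal) := by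
      rw [← EReal.toReal_coe_ennreal (x := A)]
      exact (EReal.coe_toReal (by simp [hAne]) (EReal.coe_ennreal_ne_bot _)).symm
    have hBncoe : (Bn : EReal) = ((Bn.toReal : ℝ) : EReal) := by
      rw [← EReal.toReal_coe_ennreal (x := Bn)]
      exact (EReal.coe_toReal (by simp [hBnne]) (EReal.coe_ennreal_ne_bot _)).symm
    set s : ℝ := (σ B).toReal with hsdef
    set a : ℝ := A.toReal with hadef
    set b : ℝ := Bn.toReal with hbdef
    have hineq : m * s ≤ a - b := by
      rw [hux', hσcoe, ← EReal.coe_mul, hAcoe, hBncoe, ← EReal.coe_sub] at hsB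
      exact EReal.coe_le_coe_iff.1 hsB
    -- the integrals of the two auxiliary nonnegative functions
    have hintk : (∫⁻ y in B, (ENNReal.ofReal m + toe (-(f y))) ∂σ)
        = ENNReal.ofReal m * σ B + Bn := by
      rw [lintegral_add_left measurable_const, setLIntegral_const, ← hBn]
    have hinth : (∫⁻ y in B, (ENNReal.ofReal (-m) + toe (f y)) ∂σ)
        = ENNReal.ofReal (-m) * σ B + A := by
      rw [lintegral_add_left measurable_const, setLIntegral_const, ← hA]
    have hkne' : ENNReal.ofReal m * σ B + Bn ≠ ⊤ :=
      (ENNReal.add_lt_top.2 ⟨mul_lt_top ofReal_lt_top (lt_top_iff_ne_top.2 hσBne),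
        lt_top_iff_ne_top.2 hBnne⟩).ne
    have hhne' : ENNReal.ofReal (-m) * σ B + A ≠ ⊤ :=
      (ENNReal.add_lt_top.2 ⟨mul_lt_top ofReal_lt_top (lt_top_iff_ne_top.2 hσBne),
        lt_top_iff_ne_top.2 hAne⟩).ne
    have hinth_ne : (∫⁻ y in B, (ENNReal.ofReal (-m) + toe (f y)) ∂σ) ≠ ⊤ := by
      rw [hinth]; exact hhne'
    have hsnn : 0 ≤ s := ENNReal.toReal_nonneg
    have hle_int : (∫⁻ y in B, (ENNReal.ofReal m + toe (-(f y))) ∂σ)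
        ≤ ∫⁻ y in B, (ENNReal.ofReal (-m) + toe (f y)) ∂σ := by
      rw [hintk, hinth, ← ENNReal.toReal_le_toReal hkne' hhne',
        ENNReal.toReal_add (ENNReal.mul_ne_top ofReal_ne_top hσBne) hBnne,
        ENNReal.toReal_add (ENNReal.mul_ne_top ofReal_ne_top hσBne) hAne,
        ENNReal.toReal_mul, ENNReal.toReal_mul, ENNReal.toReal_ofReal',
        ENNReal.toReal_ofReal']
      have hmaxm : max m 0 = m + max (-m) 0 := by
        rcases le_total 0 m with h' | h'
        · rw [max_eq_left h', max_eq_right (by linarith : -m ≤ 0)]; ring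
        · rw [max_eq_right h', max_eq_left (by linarith : (0:ℝ) ≤ -m)]; ring
      rw [hmaxm]
      nlinarith [hineq, hsnn]
    have hhk_ae : (fun y => ENNReal.ofReal (-m) + toe (f y))
        ≤ᵐ[σ.restrict B] fun y => ENNReal.ofReal m + toe (-(f y)) := by
      rw [Filter.EventuallyLE, ae_restrict_iff' hBmeas]
      exact Filter.Eventually.of_forall fun y hy => h_le_k m (f y) (hfleB y hy)
    have hmh : Measurable fun y => ENNReal.ofReal (-m) + toe (f y) :=
      measurable_const.add (toe_measurable.comp hfmeas)
    have hmk : Measurable fun y => ENNReal.ofReal m + toe (-(f y)) :=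
      measurable_const.add (toe_measurable.comp hfmeas.neg)
    have hC : (∫⁻ y in B,
        ((ENNReal.ofReal m + toe (-(f y))) - (ENNReal.ofReal (-m) + toe (f y))) ∂σ) = 0 := by
      rw [lintegral_sub hmh hinth_ne hhk_ae, tsub_eq_zero_iff_le.2 hle_int]
    have hg0 : ∀ᵐ y ∂σ.restrict B,
        (ENNReal.ofReal m + toe (-(f y))) - (ENNReal.ofReal (-m) + toe (f y)) = 0 := by
      exact (lintegral_eq_zero_iff (hmk.sub hmh)).1 hC
    have hfnb : ∀ᵐ y ∂σ.restrict B, f y ≠ ⊥ := by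
      have hlt : ∀ᵐ y ∂σ.restrict B, toe (-(f y)) < ⊤ :=
        ae_lt_top (toe_measurable.comp hfmeas.neg) (by rw [← hBn]; exact hBnne)
      filter_upwards [hlt] with y hy hbot'
      rw [hbot'] at hy
      simp [toe] at hy
    have hae : ∀ᵐ y ∂σ.restrict B, u y = M := by
      filter_upwards [hg0, ae_restrict_mem hBmeas, hfnb] with y h0 hyB hynb
      have hfy : f y = u y := hfu y (hBU hyB)
      have huyle : u y ≤ (m : EReal) := (hmax y (hBU hyB)).trans_eq hMm
      have huyt : u y ≠ ⊤ := hfin y (hBU hyB)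
      have huyb : u y ≠ ⊥ := by rw [← hfy]; exact hynb
      set c : ℝ := (u y).toReal with hcdef
      have hcy : u y = (c : EReal) := (EReal.coe_toReal huyt huyb).symm
      have hcm : c ≤ m := EReal.coe_le_coe_iff.1 (hcy ▸ huyle)
      have hkh : ENNReal.ofReal m + toe (-(f y)) ≤ ENNReal.ofReal (-m) + toe (f y) :=
        tsub_eq_zero_iff_le.1 h0
      rw [hfy, hcy, ← EReal.coe_neg, toe_coe, toe_coe, key_id m c hcm] at hkh
      have hne : ENNReal.ofReal (-m) + ENNReal.ofReal c ≠ ⊤ :=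
        (ENNReal.add_lt_top.2 ⟨ofReal_lt_top, ofReal_lt_top⟩).ne
      have h0' : ENNReal.ofReal (m - c) ≤ 0 := by
        have h' : ENNReal.ofReal (m - c) + (ENNReal.ofReal (-m) + ENNReal.ofReal c)
            ≤ 0 + (ENNReal.ofReal (-m) + ENNReal.ofReal c) := by
          rw [zero_add]; exact hkh
        exact (ENNReal.add_le_add_iff_right hne).1 h'
      have hmc : m ≤ c := by
        have := ENNReal.ofReal_eq_zero.1 (le_antisymm h0' zero_le)
        linarith
      rw [hcy, hMm, le_antisymm hcm hmc]
    have hnull : σ ({y | ¬ u y = M} ∩ B) = 0 := by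
      have h' := hae
      rw [MeasureTheory.ae_iff, Measure.restrict_apply' hBmeas] at h'
      exact h'
    -- openness: every point of the open ball has value M
    intro y hy
    have hyU : y ∈ U := hBU (ball_subset_closedBall hy)
    refine ⟨hyU, ?_⟩
    by_contra hne
    have hlt : u y < M := lt_of_le_of_ne (hmax y hyU) hne
    have hev : ∀ᶠ z in 𝓝 y, u z < M := by
      have h' := husc y hyU M hlt
      rwa [hUopen.nhdsWithin_eq hyU] at h'
    have hev2 : ∀ᶠ z in 𝓝 y, u z < M ∧ z ∈ ball x r :=
      hev.and (isOpen_ball.eventually_mem hy)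
    obtain ⟨δ, hδ, hδsub⟩ := Metric.eventually_nhds_iff.1 hev2
    have hσpos := hσfull y (δ / 2) (by linarith)
    have hsubset : closedBall y (δ / 2) ⊆ {z | ¬ u z = M} ∩ B := by
      intro z hz
      have hzd : dist z y < δ := lt_of_le_of_lt (mem_closedBall.1 hz) (by linarith)
      obtain ⟨h1, h2⟩ := hδsub hzd
      exact ⟨h1.ne, ball_subset_closedBall h2⟩
    exact absurd (le_antisymm ((measure_mono hsubset).trans hnull.le) zero_le) hσpos.ne'
  -- S is open
  have hSopen : IsOpen {y | y ∈ U ∧ u y = M} := by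
    rw [Metric.isOpen_iff]
    intro x hx
    obtain ⟨r, hr, hsub'⟩ := key x hx.1 hx.2
    exact ⟨r, hr, hsub'⟩
  obtain ⟨V, hVopen, hVeq⟩ := usc_rel_open husc M
  have hcover : U ⊆ {y | y ∈ U ∧ u y = M} ∪ V := by
    intro x hx
    by_cases hxe : u x = M
    · exact Or.inl ⟨hx, hxe⟩
    · have hxm : x ∈ U ∩ {y | u y < M} := ⟨hx, lt_of_le_of_ne (hmax x hx) hxe⟩
      rw [hVeq] at hxm
      exact Or.inr hxm.2
  intro x hx
  by_contra hne
  have hxV : x ∈ V := by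
    have hxm : x ∈ U ∩ {y | u y < M} := ⟨hx, lt_of_le_of_ne (hmax x hx) hne⟩
    rw [hVeq] at hxm
    exact hxm.2
  obtain ⟨z, hzU, hzS, hzV⟩ :=
    hUconn.isPreconnected _ _ hSopen hVopen hcover ⟨x₀, hx₀, hx₀, rfl⟩ ⟨x, hx, hxV⟩
  have hzm : z ∈ U ∩ {y | u y < M} := by
    rw [hVeq]
    exact ⟨hzU, hzV⟩
  exact absurd hzS.2 hzm.2.ne
end

section
/- Let (Ω,ρ) be a compact metric space and for s > 0 let K_s(x,y) = ρ(x,y)^{-s} be the Riesz kernel. Then K_s is regular: for every finite unsigned Borel measure μ on Ω, if the potential U_{K_s}^μ is finite and continuous when restricted to supp(μ), then U_{K_s}^μ is finite and continuous on all of Ω. -/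
open MeasureTheory Metric Set ENNReal

/-- The potential of a measure `μ` with respect to a kernel `K`. -/
noncomputable def pot {Ω : Type*} [MeasurableSpace Ω] (K : Ω → Ω → ℝ≥0∞)
    (μ : Measure Ω) (x : Ω) : ℝ≥0∞ := ∫⁻ y, K x y ∂μ

/-- The support of a Borel measure: points all of whose open neighbourhoods have
positive measure. -/
def msupp {Ω : Type*} [TopologicalSpace Ω] [MeasurableSpace Ω] (μ : Measure Ω) : Set Ω :=
  {x | ∀ V : Set Ω, IsOpen V → x ∈ V → 0 < μ V}

set_option linter.unusedSectionVars false

open Filter Topology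
section RieszAux

variable {Ω : Type*} [MetricSpace Ω] [MeasurableSpace Ω] [BorelSpace Ω]

lemma riesz_cont (s : ℝ) : Continuous (fun p : Ω × Ω => edist p.1 p.2 ^ (-s)) :=
  ENNReal.continuous_rpow_const.comp continuous_edist

lemma riesz_cont_left (s : ℝ) (y : Ω) : Continuous (fun x : Ω => edist x y ^ (-s)) :=
  ENNReal.continuous_rpow_const.comp (continuous_id.edist continuous_const)

lemma riesz_meas (s : ℝ) (x : Ω) : Measurable (fun y : Ω => edist x y ^ (-s)) :=
  (ENNReal.continuous_rpow_const.comp (continuous_const.edist continuous_id)).measurable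

lemma msupp_isClosed (μ : Measure Ω) : IsClosed (msupp μ) := by
  rw [← isOpen_compl_iff, isOpen_iff_forall_mem_open]
  intro x hx
  simp only [msupp, mem_compl_iff, mem_setOf_eq, not_forall] at hx
  obtain ⟨V, hVopen, hxV, hV⟩ := hx
  refine ⟨V, fun z hz hzmem => ?_, hVopen, hxV⟩
  exact absurd (hzmem V hVopen hz) hV

lemma msupp_compl_null [SecondCountableTopology Ω] (μ : Measure Ω) : μ (msupp μ)ᶜ = 0 := by
  set S : Set (Set Ω) := {V | IsOpen V ∧ μ V = 0} with hS
  have h1 : (msupp μ)ᶜ ⊆ ⋃₀ S := by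
    intro x hx
    simp only [msupp, mem_compl_iff, mem_setOf_eq, not_forall] at hx
    obtain ⟨V, hVopen, hxV, hV⟩ := hx
    exact ⟨V, ⟨hVopen, by simpa using hV⟩, hxV⟩
  obtain ⟨T, hTc, hTS, hTU⟩ := TopologicalSpace.isOpen_sUnion_countable S fun s hs => hs.1
  have h2 : μ (⋃₀ T) = 0 := (measure_sUnion_null_iff hTc).2 fun V hV => (hTS hV).2
  exact measure_mono_null (hTU ▸ h1) h2

/-- The basic kernel comparison: if `a ≤ 2 b` then `b ^ (-s) ≤ 2 ^ s * a ^ (-s)`. -/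
lemma riesz_kernel_comp {s : ℝ} (hs : 0 < s) {a b : ℝ≥0∞} (hb : b ≠ ⊤) (hab : a ≤ 2 * b) :
    b ^ (-s) ≤ 2 ^ s * a ^ (-s) := by
  have h2 : ((2 : ℝ≥0∞) * b) ^ (-s) ≤ a ^ (-s) := by
    rw [ENNReal.rpow_neg, ENNReal.rpow_neg]
    exact ENNReal.inv_le_inv.2 (ENNReal.rpow_le_rpow hab hs.le)
  have h3 : ((2 : ℝ≥0∞) * b) ^ (-s) = 2 ^ (-s) * b ^ (-s) :=
    ENNReal.mul_rpow_of_ne_top (by norm_num) hb _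
  calc b ^ (-s) = 2 ^ s * (2 ^ (-s) * b ^ (-s)) := by
        rw [← mul_assoc, ← ENNReal.rpow_add s (-s) (by norm_num) (by norm_num)]
        simp
    _ ≤ 2 ^ s * a ^ (-s) := by
        refine mul_le_mul_right ?_ _
        rw [← h3]; exact h2

lemma riesz_two_rpow_ne_top (s : ℝ) (hs : 0 < s) : (2 : ℝ≥0∞) ^ s ≠ ⊤ :=
  ENNReal.rpow_ne_top_of_nonneg hs.le (by norm_num)

/-- Comparison of potentials at `x` and a nearest point `x'` of `F`. -/
lemma riesz_lint_comp {s : ℝ} (hs : 0 < s) (ν : Measure Ω) {F : Set Ω}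
    (hae : ∀ᵐ y ∂ν, y ∈ F) {x x' : Ω}
    (h : ∀ y ∈ F, edist x' y ≤ 2 * edist x y) :
    ∫⁻ y, edist x y ^ (-s) ∂ν ≤ 2 ^ s * ∫⁻ y, edist x' y ^ (-s) ∂ν := by
  rw [← lintegral_const_mul' _ _ (riesz_two_rpow_ne_top s hs)]
  refine lintegral_mono_ae ?_
  filter_upwards [hae] with y hy
  exact riesz_kernel_comp hs (edist_ne_top x y) (h y hy)

/-- Nearest point of a compact nonempty set, with the 2-Lipschitz kernel comparison. -/
lemma riesz_near_pt {F : Set Ω} (hF : IsCompact F) (hne : F.Nonempty) (x : Ω) :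
    ∃ x' ∈ F, dist x x' = infDist x F ∧ ∀ y ∈ F, edist x' y ≤ 2 * edist x y := by
  obtain ⟨x', hx'F, hx'⟩ := hF.exists_infDist_eq_dist hne x
  refine ⟨x', hx'F, hx'.symm, fun y hy => ?_⟩
  have h1 : edist x' x ≤ edist x y := by
    rw [edist_comm, edist_dist, edist_dist]
    exact ENNReal.ofReal_le_ofReal (hx' ▸ infDist_le_dist_of_mem hy)
  calc edist x' y ≤ edist x' x + edist x y := edist_triangle _ _ _
    _ ≤ edist x y + edist x y := add_le_add h1 le_rfl
    _ = 2 * edist x y := (two_mul _).symm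

end RieszAux

section RieszAux2

variable {Ω : Type*} [MetricSpace Ω] [MeasurableSpace Ω] [BorelSpace Ω]

/-- Dominated-convergence continuity of potentials away from the mass. -/
lemma riesz_tendsto_aux {s : ℝ} (hs : 0 < s) (ν : Measure Ω) [IsFiniteMeasure ν] {x₀ : Ω}
    {c : ℝ} (hc : 0 < c) (h : ∀ᶠ x in 𝓝 x₀, ∀ᵐ y ∂ν, c ≤ dist x y) :
    Tendsto (fun x => ∫⁻ y, edist x y ^ (-s) ∂ν) (𝓝 x₀)
      (𝓝 (∫⁻ y, edist x₀ y ^ (-s) ∂ν)) := by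
  have hbne : (ENNReal.ofReal c) ^ (-s) ≠ ⊤ := by
    intro hb
    rcases ENNReal.rpow_eq_top_iff.1 hb with ⟨h0, -⟩ | ⟨htop, -⟩
    · exact absurd h0 (by simpa using hc)
    · exact ENNReal.ofReal_ne_top htop
  refine tendsto_lintegral_filter_of_dominated_convergence
    (fun _ => (ENNReal.ofReal c) ^ (-s)) (Eventually.of_forall fun x => riesz_meas s x) ?_ ?_ ?_
  · filter_upwards [h] with x hx
    filter_upwards [hx] with y hy
    have h1 : ENNReal.ofReal c ≤ edist x y := by
      rw [edist_dist]; exact ENNReal.ofReal_le_ofReal hy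
    rw [ENNReal.rpow_neg, ENNReal.rpow_neg]
    exact ENNReal.inv_le_inv.2 (ENNReal.rpow_le_rpow h1 hs.le)
  · rw [lintegral_const]
    exact ENNReal.mul_ne_top hbne (measure_ne_top ν univ)
  · exact Eventually.of_forall fun y => ((riesz_cont_left s y).tendsto x₀)

/-- `⨆ n, min a n = a` in `ℝ≥0∞`. -/
lemma riesz_iSup_min (a : ℝ≥0∞) : ⨆ n : ℕ, min a (n : ℝ≥0∞) = a := by
  rcases eq_or_ne a ⊤ with rfl | ha
  · simpa using ENNReal.iSup_natCast
  · refine le_antisymm (iSup_le fun n => min_le_left _ _) ?_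
    obtain ⟨n, hn⟩ := ENNReal.exists_nat_gt ha
    refine le_trans ?_ (le_iSup (fun n : ℕ => min a (n : ℝ≥0∞)) n)
    rw [min_eq_left hn.le]

/-- Lower semicontinuity of the potential. -/
lemma riesz_le_liminf {s : ℝ} (μ : Measure Ω) [IsFiniteMeasure μ] (x₀ : Ω) :
    pot (fun x y => edist x y ^ (-s)) μ x₀ ≤
      liminf (pot (fun x y => edist x y ^ (-s)) μ) (𝓝 x₀) := by
  set g : ℕ → Ω → ℝ≥0∞ := fun n x => ∫⁻ y, min (edist x y ^ (-s)) n ∂μ with hg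
  have hgcont : ∀ n, Continuous (g n) := by
    intro n
    rw [continuous_iff_continuousAt]
    intro x₀
    refine tendsto_lintegral_filter_of_dominated_convergence (fun _ => (n : ℝ≥0∞))
      (Eventually.of_forall fun x => (riesz_meas s x).min measurable_const)
      (Eventually.of_forall fun x => Eventually.of_forall fun y => min_le_right _ _) ?_
      (Eventually.of_forall fun y =>
        ((riesz_cont_left s y).min continuous_const).tendsto x₀)
    rw [lintegral_const]
    exact ENNReal.mul_ne_top (natCast_ne_top n) (measure_ne_top μ univ)
  have hpot : ∀ x, pot (fun x y => edist x y ^ (-s)) μ x = ⨆ n : ℕ, g n x := by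
    intro x
    rw [pot, hg]
    rw [← lintegral_iSup' (fun n => ((riesz_meas s x).min measurable_const).aemeasurable)
      (Eventually.of_forall fun y => fun i j hij =>
        min_le_min le_rfl (Nat.cast_le.2 hij))]
    congr 1
    ext y
    exact (riesz_iSup_min _).symm
  rw [hpot x₀]
  refine iSup_le fun n => ?_
  have h1 : g n x₀ = liminf (g n) (𝓝 x₀) := (((hgcont n).tendsto x₀).liminf_eq).symm
  rw [h1]
  refine liminf_le_liminf (Eventually.of_forall fun x => ?_)
  rw [hpot x]
  exact le_iSup (fun n => g n x) n

end RieszAux2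

section RieszAux3

variable {Ω : Type*} [MetricSpace Ω] [MeasurableSpace Ω] [BorelSpace Ω]

lemma riesz_small_ball {s : ℝ} (hs : 0 < s) (μ : Measure Ω) [IsFiniteMeasure μ] {x₀ : Ω}
    (hx₀ : ∫⁻ y, edist x₀ y ^ (-s) ∂μ ≠ ⊤) {ε : ℝ≥0∞} (hε : 0 < ε) :
    ∃ r : ℝ, 0 < r ∧ ∫⁻ y in closedBall x₀ (2 * r), edist x₀ y ^ (-s) ∂μ < ε := by
  set ν : Measure Ω := μ.withDensity (fun y => edist x₀ y ^ (-s)) with hν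
  have hνball : ∀ t : Set Ω, MeasurableSet t → ν t = ∫⁻ y in t, edist x₀ y ^ (-s) ∂μ :=
    fun t ht => withDensity_apply _ ht
  have hνuniv : ν univ = ∫⁻ y, edist x₀ y ^ (-s) ∂μ := by
    rw [hνball univ MeasurableSet.univ, Measure.restrict_univ]
  have hνfin : ν univ ≠ ⊤ := by rw [hνuniv]; exact hx₀
  have hμx : μ {x₀} = 0 := by
    by_contra hne0
    have h1 : ν {x₀} = ⊤ := by
      rw [hνball _ (measurableSet_singleton x₀), lintegral_singleton, edist_self,
        ENNReal.zero_rpow_of_neg (neg_lt_zero.2 hs), ENNReal.top_mul hne0]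
    exact hνfin (top_le_iff.1 (h1 ▸ measure_mono (subset_univ _)))
  have hsing : ν {x₀} = 0 := by
    rw [hνball _ (measurableSet_singleton x₀), lintegral_singleton, hμx, mul_zero]
  have hanti : Antitone (fun n : ℕ => closedBall x₀ (1 / (n + 1 : ℝ))) := by
    intro i j hij
    refine closedBall_subset_closedBall (by
      apply one_div_le_one_div_of_le
      · positivity
      · exact_mod_cast add_le_add (Nat.cast_le.2 hij) (le_refl (1:ℝ)))
  have hinter : ⋂ n : ℕ, closedBall x₀ (1 / (n + 1 : ℝ)) = {x₀} := by
    ext y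
    simp only [mem_iInter, mem_closedBall, mem_singleton_iff]
    constructor
    · intro h
      have hd : dist y x₀ ≤ 0 := by
        by_contra hlt
        push_neg at hlt
        obtain ⟨n, hn⟩ := exists_nat_one_div_lt hlt
        exact absurd (h n) (not_le.2 hn)
      exact dist_le_zero.1 hd
    · rintro rfl
      intro n
      rw [dist_self]
      positivity
  have htend := tendsto_measure_iInter_atTop (μ := ν)
    (fun n => measurableSet_closedBall.nullMeasurableSet) hanti
    ⟨0, ne_top_of_le_ne_top hνfin (measure_mono (subset_univ _))⟩
  rw [hinter, hsing] at htend
  obtain ⟨n, hn⟩ := (htend.eventually_lt_const hε).exists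
  refine ⟨1 / (n + 1 : ℝ) / 2, by positivity, ?_⟩
  have hsub : closedBall x₀ (2 * (1 / (n + 1 : ℝ) / 2)) ⊆ closedBall x₀ (1 / (n + 1 : ℝ)) :=
    closedBall_subset_closedBall (by linarith [one_div_pos.2 (by positivity : (0:ℝ) < (n:ℝ) + 1)])
  calc ∫⁻ y in closedBall x₀ (2 * (1 / (n + 1 : ℝ) / 2)), edist x₀ y ^ (-s) ∂μ
      = ν (closedBall x₀ (2 * (1 / (n + 1 : ℝ) / 2))) :=
        (hνball _ measurableSet_closedBall).symm
    _ ≤ ν (closedBall x₀ (1 / (n + 1 : ℝ))) := measure_mono hsub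
    _ < ε := hn

end RieszAux3

/-- The Riesz kernel `K_s(x,y) = ρ(x,y)^{-s}` (`s > 0`) on a compact metric space is
regular: if the potential of a finite measure `μ` is finite and continuous on `supp μ`,
then it is finite and continuous on all of `Ω`. -/
theorem riesz_regular
    {Ω : Type*} [MetricSpace Ω] [CompactSpace Ω]
    [MeasurableSpace Ω] [BorelSpace Ω]
    (s : ℝ) (hs : 0 < s)
    (μ : Measure Ω) [IsFiniteMeasure μ]
    (hcont : ContinuousOn (pot (fun x y => edist x y ^ (-s)) μ) (msupp μ))
    (hfin : ∀ x ∈ msupp μ, pot (fun x y => edist x y ^ (-s)) μ x ≠ ⊤) :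
    Continuous (pot (fun x y => edist x y ^ (-s)) μ) ∧
      ∀ x : Ω, pot (fun x y => edist x y ^ (-s)) μ x ≠ ⊤ := by

  set F : Set Ω := msupp μ with hF
  have hFclosed : IsClosed F := msupp_isClosed μ
  have hFnull : μ Fᶜ = 0 := msupp_compl_null μ
  have haeF : ∀ᵐ y ∂μ, y ∈ F := by
    rw [MeasureTheory.ae_iff]
    exact hFnull
  rcases F.eq_empty_or_nonempty with hFe | hne
  · -- the measure is zero
    have hμ0 : μ = 0 := by
      refine Measure.measure_univ_eq_zero.1 ?_
      have h1 : (univ : Set Ω) = Fᶜ := by rw [hFe, compl_empty]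
      rw [h1]; exact hFnull
    have hpot0 : pot (fun x y => edist x y ^ (-s)) μ = fun _ => 0 := by
      funext x; rw [pot, hμ0, lintegral_zero_measure]
    rw [hpot0]
    exact ⟨continuous_const, fun x => by simp⟩
  have hFcpt : IsCompact F := hFclosed.isCompact
  have h2s : (2 : ℝ≥0∞) ^ s ≠ ⊤ := riesz_two_rpow_ne_top s hs
  have hfin' : ∀ x : Ω, pot (fun x y => edist x y ^ (-s)) μ x ≠ ⊤ := by
    intro x
    obtain ⟨x', hx'F, -, hcomp⟩ := riesz_near_pt hFcpt hne x
    have h1 : pot (fun x y => edist x y ^ (-s)) μ x ≤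
        2 ^ s * pot (fun x y => edist x y ^ (-s)) μ x' :=
      riesz_lint_comp hs μ haeF hcomp
    exact ne_top_of_le_ne_top (ENNReal.mul_ne_top h2s (hfin x' hx'F)) h1
  refine ⟨continuous_iff_continuousAt.2 fun x₀ => ?_, hfin'⟩
  have hliminf := riesz_le_liminf (s := s) μ x₀
  have hlimsup : limsup (pot (fun x y => edist x y ^ (-s)) μ) (𝓝 x₀) ≤
      pot (fun x y => edist x y ^ (-s)) μ x₀ := by
    by_cases hx₀F : x₀ ∈ F
    · -- hard case : x₀ in the support
      have hx₀fin : pot (fun x y => edist x y ^ (-s)) μ x₀ ≠ ⊤ := hfin' x₀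
      refine ENNReal.le_of_forall_pos_le_add fun ε' hε' _ => ?_
      set C : ℝ≥0∞ := 3 * 2 ^ s + 1 with hC
      have hC0 : C ≠ 0 := (lt_of_lt_of_le zero_lt_one le_add_self).ne'
      have hCtop : C ≠ ⊤ :=
        ENNReal.add_ne_top.2 ⟨ENNReal.mul_ne_top (by norm_num) h2s, one_ne_top⟩
      set ε : ℝ≥0∞ := (ε' : ℝ≥0∞) / C with hεdef
      have hεpos : 0 < ε := ENNReal.div_pos (by exact_mod_cast hε'.ne') hCtop
      have hCε : C * ε = ε' := ENNReal.mul_div_cancel hC0 hCtop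
      obtain ⟨r, hr, hsmall⟩ := riesz_small_ball hs μ hx₀fin hεpos
      set B : Set Ω := closedBall x₀ (2 * r) with hB
      have hBmeas : MeasurableSet B := measurableSet_closedBall
      set nr : Ω → ℝ≥0∞ := fun x => ∫⁻ y in B, edist x y ^ (-s) ∂μ with hnr
      set fr : Ω → ℝ≥0∞ := fun x => ∫⁻ y in Bᶜ, edist x y ^ (-s) ∂μ with hfr
      have hsplit : ∀ x, pot (fun x y => edist x y ^ (-s)) μ x = nr x + fr x := by
        intro x
        rw [pot, hnr, hfr, ← lintegral_add_compl _ hBmeas]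
      have hfrle : ∀ x, fr x ≤ pot (fun x y => edist x y ^ (-s)) μ x := by
        intro x
        rw [hsplit x]
        exact le_add_self
      have hfr_fin : fr x₀ ≠ ⊤ := ne_top_of_le_ne_top hx₀fin (hfrle x₀)
      have hftend : Tendsto fr (𝓝 x₀) (𝓝 (fr x₀)) := by
        refine riesz_tendsto_aux hs (μ.restrict Bᶜ) hr ?_
        filter_upwards [Metric.ball_mem_nhds x₀ hr] with x hx
        filter_upwards [ae_restrict_mem hBmeas.compl] with y hy
        have h1 : 2 * r < dist y x₀ := by
          simpa [hB, mem_closedBall, not_le] using hy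
        have h2 : dist x x₀ < r := mem_ball.1 hx
        have h3 := dist_triangle y x₀ x
        have h4 : dist y x = dist x y := dist_comm _ _
        have h5 : dist x₀ x = dist x x₀ := dist_comm _ _
        have h6 := dist_triangle y x x₀
        linarith
      have hpotF : Tendsto (pot (fun x y => edist x y ^ (-s)) μ) (𝓝[F] x₀)
          (𝓝 (pot (fun x y => edist x y ^ (-s)) μ x₀)) := hcont x₀ hx₀F
      have h1 : ∀ᶠ z in 𝓝[F] x₀, pot (fun x y => edist x y ^ (-s)) μ z <
          pot (fun x y => edist x y ^ (-s)) μ x₀ + ε :=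
        hpotF.eventually_lt_const (ENNReal.lt_add_right hx₀fin hεpos.ne')
      have h2 : ∀ᶠ z in 𝓝[F] x₀, fr x₀ ≤ fr z + ε := by
        rcases eq_or_ne (fr x₀) 0 with h0 | h0
        · exact Eventually.of_forall fun z => by rw [h0]; exact zero_le
        · have hlt : fr x₀ - ε < fr x₀ := ENNReal.sub_lt_self hfr_fin h0 hεpos.ne'
          filter_upwards [(hftend.mono_left nhdsWithin_le_nhds).eventually_const_lt hlt]
            with z hz
          exact tsub_le_iff_right.1 hz.le
      have h3 : ∀ᶠ z in 𝓝[F] x₀, nr z ≤ 3 * ε := by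
        filter_upwards [h1, h2] with z hz1 hz2
        have hfz : fr z ≠ ⊤ := ne_top_of_le_ne_top (hfin' z) (hfrle z)
        have key : nr z + fr z ≤ 3 * ε + fr z := by
          calc nr z + fr z = pot (fun x y => edist x y ^ (-s)) μ z := (hsplit z).symm
            _ ≤ pot (fun x y => edist x y ^ (-s)) μ x₀ + ε := hz1.le
            _ = (nr x₀ + fr x₀) + ε := by rw [hsplit x₀]
            _ ≤ (ε + (fr z + ε)) + ε := by gcongr
            _ = 3 * ε + fr z := by ring
        exact (ENNReal.add_le_add_iff_right hfz).1 key
      obtain ⟨δ, hδ, hδprop⟩ : ∃ δ > 0, ∀ z ∈ F, dist z x₀ < δ → nr z ≤ 3 * ε := by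
        rw [eventually_nhdsWithin_iff] at h3
        obtain ⟨δ, hδ, hball⟩ := Metric.eventually_nhds_iff_ball.1 h3
        exact ⟨δ, hδ, fun z hzF hzd => hball z (mem_ball.2 hzd) hzF⟩
      have hnear : ∀ᶠ x in 𝓝 x₀, nr x ≤ 2 ^ s * (3 * ε) := by
        filter_upwards [Metric.ball_mem_nhds x₀ (half_pos hδ)] with x hx
        obtain ⟨x', hx'F, hx'd, hcomp⟩ := riesz_near_pt hFcpt hne x
        have hd1 : dist x x' ≤ dist x x₀ := hx'd ▸ infDist_le_dist_of_mem hx₀F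
        have hd2 : dist x' x₀ < δ := by
          have e1 : dist x' x = dist x x' := dist_comm _ _
          have e2 := dist_triangle x' x x₀
          have e3 : dist x x₀ < δ / 2 := mem_ball.1 hx
          linarith
        have hcmp : nr x ≤ 2 ^ s * nr x' :=
          riesz_lint_comp hs (μ.restrict B) (ae_restrict_of_ae haeF) hcomp
        exact hcmp.trans (mul_le_mul_right (hδprop x' hx'F hd2) _)
      have hfar : ∀ᶠ x in 𝓝 x₀, fr x < fr x₀ + ε :=
        hftend.eventually_lt_const (ENNReal.lt_add_right hfr_fin hεpos.ne')
      have hev : ∀ᶠ x in 𝓝 x₀, pot (fun x y => edist x y ^ (-s)) μ x ≤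
          pot (fun x y => edist x y ^ (-s)) μ x₀ + ε' := by
        filter_upwards [hnear, hfar] with x h4 h5
        have h6 : pot (fun x y => edist x y ^ (-s)) μ x ≤
            2 ^ s * (3 * ε) + (fr x₀ + ε) := by
          rw [hsplit x]
          exact add_le_add h4 h5.le
        refine h6.trans ?_
        have hfx₀ : fr x₀ ≤ pot (fun x y => edist x y ^ (-s)) μ x₀ := hfrle x₀
        calc 2 ^ s * (3 * ε) + (fr x₀ + ε) = fr x₀ + (3 * 2 ^ s + 1) * ε := by ring
          _ ≤ pot (fun x y => edist x y ^ (-s)) μ x₀ + (3 * 2 ^ s + 1) * ε := by gcongr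
          _ = pot (fun x y => edist x y ^ (-s)) μ x₀ + ε' := by rw [← hC, hCε]
      exact limsup_le_of_le (h := hev)
    · -- easy case : x₀ outside the support
      have hd : 0 < infDist x₀ F := (hFclosed.notMem_iff_infDist_pos hne).1 hx₀F
      have h : ∀ᶠ x in 𝓝 x₀, ∀ᵐ y ∂μ, infDist x₀ F / 2 ≤ dist x y := by
        filter_upwards [Metric.ball_mem_nhds x₀ (half_pos hd)] with x hx
        filter_upwards [haeF] with y hy
        have h1 : infDist x₀ F ≤ dist x₀ y := infDist_le_dist_of_mem hy
        have h2 : dist x x₀ < infDist x₀ F / 2 := mem_ball.1 hx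
        have h3 := dist_triangle x₀ x y
        have h4 : dist x₀ x = dist x x₀ := dist_comm _ _
        linarith
      have htend := riesz_tendsto_aux hs μ (half_pos hd) h
      exact le_of_eq (Tendsto.limsup_eq htend)
  exact tendsto_of_le_liminf_of_limsup_le hliminf hlimsup
end

section
/- Let (Ω,ρ) be a compact metric space and K : Ω × Ω → [0,∞] a symmetric extended-continuous kernel. Suppose μ is a minimizing Borel probability measure for the energy I_K with I_K(μ) < ∞. Then U_K^μ(x) ≤ I_K(μ) for every x ∈ supp(μ). -/
open MeasureTheory Metric Set ENNReal Filter Topology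

/-- The energy of a measure `μ` with respect to a kernel `K`. -/
noncomputable def energy {Ω : Type*} [MeasurableSpace Ω] (K : Ω → Ω → ℝ≥0∞)
    (μ : Measure Ω) : ℝ≥0∞ := ∫⁻ x, ∫⁻ y, K x y ∂μ ∂μ

/-- symmetry of the double integral -/
lemma double_swap {Ω : Type*} [MeasurableSpace Ω] (K : Ω → Ω → ℝ≥0∞)
    (hK : Measurable (Function.uncurry K)) (hsym : ∀ x y, K x y = K y x)
    (ρ σ : Measure Ω) [SFinite ρ] [SFinite σ] :
    ∫⁻ x, ∫⁻ y, K x y ∂σ ∂ρ = ∫⁻ x, ∫⁻ y, K x y ∂ρ ∂σ := by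
  have h1 : ∫⁻ x, ∫⁻ y, K x y ∂σ ∂ρ = ∫⁻ x, ∫⁻ y, K y x ∂σ ∂ρ := by
    simp_rw [fun x y => hsym x y]
  rw [h1]
  exact lintegral_lintegral_swap ((hK.comp measurable_swap).aemeasurable)

/-- monotonicity of the double integral in both measures -/
lemma double_mono {Ω : Type*} [MeasurableSpace Ω] (K : Ω → Ω → ℝ≥0∞)
    {ρ ρ' σ σ' : Measure Ω} (hρ : ρ ≤ ρ') (hσ : σ ≤ σ') :
    ∫⁻ x, ∫⁻ y, K x y ∂σ ∂ρ ≤ ∫⁻ x, ∫⁻ y, K x y ∂σ' ∂ρ' := by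
  refine le_trans (lintegral_mono fun x => lintegral_mono' hσ le_rfl) ?_
  exact lintegral_mono' hρ le_rfl

/-- If `μ` is an energy-minimizing probability measure of finite energy for a symmetric
extended-continuous kernel on a compact metric space, then its potential is bounded by
its energy on the support of `μ`. -/
theorem potential_le_energy_on_support
    {Ω : Type*} [MetricSpace Ω] [CompactSpace Ω]
    [MeasurableSpace Ω] [BorelSpace Ω]
    (K : Ω → Ω → ℝ≥0∞) (hsym : ∀ x y, K x y = K y x)
    (hKcont : Continuous (Function.uncurry K))
    (μ : Measure Ω) [IsProbabilityMeasure μ]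
    (hmin : ∀ ν : Measure Ω, IsProbabilityMeasure ν → energy K μ ≤ energy K ν)
    (hfin : energy K μ ≠ ⊤) :
    ∀ x ∈ msupp μ, pot K μ x ≤ energy K μ := by
  intro x₀ hx₀
  by_contra hgt
  push_neg at hgt
  have hK : Measurable (Function.uncurry K) := hKcont.measurable
  set I : ℝ≥0∞ := energy K μ with hIdef
  -- choose c strictly between I and pot x₀
  obtain ⟨c, hIc, hcp⟩ := exists_between hgt
  have hc_top : c ≠ ∞ := hcp.ne_top
  -- lower semicontinuity: a ball on which pot > c
  obtain ⟨r, hr0, hr⟩ : ∃ r > 0, ∀ x ∈ ball x₀ r, c < pot K μ x := by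
    by_contra hno
    push_neg at hno
    choose xs hxs hpc using fun n : ℕ => hno (1 / (n + 1) : ℝ) (by positivity)
    have hxt : Tendsto xs atTop (𝓝 x₀) := by
      rw [tendsto_iff_dist_tendsto_zero]
      refine squeeze_zero (fun n => dist_nonneg) (fun n => (mem_ball.mp (hxs n)).le) ?_
      exact tendsto_one_div_add_atTop_nhds_zero_nat
    have hle : pot K μ x₀ ≤ c := by
      calc pot K μ x₀ = ∫⁻ y, liminf (fun n => K (xs n) y) atTop ∂μ := by
            unfold pot
            congr 1
            funext y
            have hcy : Continuous fun x => K x y :=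
              hKcont.comp (continuous_id.prodMk continuous_const)
            exact ((hcy.tendsto x₀).comp hxt).liminf_eq.symm
        _ ≤ liminf (fun n => pot K μ (xs n)) atTop :=
            lintegral_liminf_le fun n => hK.of_uncurry_left
        _ ≤ c := by
            refine liminf_le_of_le ?_ ?_
            · isBoundedDefault
            · exact fun b hb => by
                obtain ⟨n, hn⟩ := hb.exists
                exact hn.trans (hpc n)
    exact absurd hle (not_le.mpr hcp)
  set B : Set Ω := ball x₀ r with hBdef
  have hB : MeasurableSet B := isOpen_ball.measurableSet
  set m : ℝ≥0∞ := μ B with hmdef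
  have hm0 : m ≠ 0 := (hx₀ B isOpen_ball (mem_ball_self hr0)).ne'
  have hm1 : m ≤ 1 := prob_le_one
  -- potential is measurable
  have hpotm : ∀ (ρ : Measure Ω) [SFinite ρ], Measurable (fun x => ∫⁻ y, K x y ∂ρ) :=
    fun ρ _ => hK.lintegral_prod_right
  set b : Measure Ω := μ.restrict B with hbdef
  set g : Measure Ω := μ.restrict Bᶜ with hgdef
  have hbg : b + g = μ := Measure.restrict_add_restrict_compl hB
  -- the four pieces of the energy
  set Ebb : ℝ≥0∞ := ∫⁻ x, ∫⁻ y, K x y ∂b ∂b with hEbb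
  set Ebg : ℝ≥0∞ := ∫⁻ x, ∫⁻ y, K x y ∂g ∂b with hEbg
  set Egb : ℝ≥0∞ := ∫⁻ x, ∫⁻ y, K x y ∂b ∂g with hEgb
  set Egg : ℝ≥0∞ := ∫⁻ x, ∫⁻ y, K x y ∂g ∂g with hEgg
  have hsymE : Egb = Ebg := double_swap K hK hsym g b
  have hbμ : b ≤ μ := Measure.restrict_le_self
  have hgμ : g ≤ μ := Measure.restrict_le_self
  have hEbb_le : Ebb ≤ I := double_mono K hbμ hbμ
  have hEbg_le : Ebg ≤ I := double_mono K hbμ hgμ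
  have hEgg_le : Egg ≤ I := double_mono K hgμ hgμ
  have hI_top : I ≠ ∞ := hfin
  -- pointwise potential splits
  have hpot_split : ∀ x, pot K μ x = (∫⁻ y, K x y ∂b) + ∫⁻ y, K x y ∂g := by
    intro x
    rw [pot, ← hbg, lintegral_add_measure]
  -- P = ∫_B pot dμ
  set P : ℝ≥0∞ := ∫⁻ x, pot K μ x ∂b with hPdef
  have hP_split : P = Ebb + Ebg := by
    rw [hPdef]
    simp_rw [hpot_split]
    rw [lintegral_add_left (hpotm b)]
  -- I splits
  have hI_split : I = (Ebb + Ebg) + (Egb + Egg) := by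
    rw [hIdef, energy]
    conv_lhs => rw [← hbg]
    rw [lintegral_add_measure]
    congr 1
    · simp_rw [show ∀ x, ∫⁻ y, K x y ∂(b + g) = (∫⁻ y, K x y ∂b) + ∫⁻ y, K x y ∂g from
        fun x => lintegral_add_measure _ _ _]
      rw [lintegral_add_left (hpotm b)]
    · simp_rw [show ∀ x, ∫⁻ y, K x y ∂(b + g) = (∫⁻ y, K x y ∂b) + ∫⁻ y, K x y ∂g from
        fun x => lintegral_add_measure _ _ _]
      rw [lintegral_add_left (hpotm b)]
  have hP_le : P ≤ I := by
    rw [hP_split, hI_split]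
    exact le_add_right le_rfl
  have hcm_le_P : c * m ≤ P := by
    have : c * m = ∫⁻ _ in B, c ∂μ := (setLIntegral_const B c).symm
    rw [this, hPdef, hbdef]
    exact setLIntegral_mono (hpotm μ) fun x hx => (hr x hx).le
  -- I > 0
  have hI0 : I ≠ 0 := by
    intro h0
    have : c * m ≤ 0 := by rw [← h0]; exact hcm_le_P.trans hP_le
    have hc0 : c ≠ 0 := by
      intro hc; rw [hc] at hIc; exact absurd hIc (not_lt_of_ge (zero_le (a := I)))
    simp [mul_eq_zero, hc0, hm0] at this
  -- choose the parameter t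
  set d : ℝ≥0∞ := min (c - I) I with hddef
  have hd0 : d ≠ 0 := by
    simp only [hddef, ne_eq, min_eq_iff, not_or]
    have h1 : c - I ≠ 0 := by
      rw [← pos_iff_ne_zero]
      exact tsub_pos_of_lt hIc
    push_neg
    constructor <;> intro h <;> simp_all
  have hd_le_I : d ≤ I := min_le_right _ _
  have hd_top : d ≠ ∞ := (hd_le_I.trans_lt hI_top.lt_top).ne
  have hId_le_c : I + d ≤ c := by
    calc I + d ≤ I + (c - I) := add_le_add_right (min_le_left _ _) I
      _ = c := add_tsub_cancel_of_le hIc.le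
  set t : ℝ≥0∞ := m * d * (2 * I)⁻¹ with htdef
  have h2I0 : (2 : ℝ≥0∞) * I ≠ 0 := by simp [hI0]
  have h2Itop : (2 : ℝ≥0∞) * I ≠ ∞ := by
    simp [ENNReal.mul_eq_top, hI_top]
  have ht0 : t ≠ 0 := by
    simp only [htdef]
    refine mul_ne_zero (mul_ne_zero ?_ hd0) (ENNReal.inv_ne_zero.mpr h2Itop)
    exact hm0
  have hm_top : m ≠ ∞ := (hm1.trans_lt one_lt_top).ne
  have ht_top : t ≠ ∞ := by
    simp only [htdef]
    exact ENNReal.mul_ne_top (ENNReal.mul_ne_top hm_top hd_top)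
      (ENNReal.inv_ne_top.mpr h2I0)
  have hinv2I : (2 * I)⁻¹ = 2⁻¹ * I⁻¹ :=
    ENNReal.mul_inv (Or.inl two_ne_zero) (Or.inl (by norm_num))
  have htI : t * I = m * d * 2⁻¹ := by
    rw [htdef, hinv2I]
    calc m * d * (2⁻¹ * I⁻¹) * I = m * d * 2⁻¹ * (I⁻¹ * I) := by ring
      _ = m * d * 2⁻¹ := by rw [ENNReal.inv_mul_cancel hI0 hI_top, mul_one]
  have ht_half : t ≤ 2⁻¹ := by
    calc t = m * d * (2⁻¹ * I⁻¹) := by rw [htdef, hinv2I]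
      _ ≤ 1 * I * (2⁻¹ * I⁻¹) := by gcongr
      _ = 2⁻¹ * (I * I⁻¹) := by ring
      _ = 2⁻¹ := by rw [ENNReal.mul_inv_cancel hI0 hI_top, mul_one]
  have ht1 : t ≤ 1 := ht_half.trans (by norm_num)
  -- the core numeric inequality
  have hmd0 : m * d ≠ 0 := mul_ne_zero hm0 hd0
  have hmd_top : m * d ≠ ∞ := ENNReal.mul_ne_top hm_top hd_top
  have hcore : t * I + 2 * m * I < 2 * (c * m) := by
    have h1 : m * d * 2⁻¹ < 2 * (m * d) := by
      calc m * d * 2⁻¹ = 2⁻¹ * (m * d) := by ring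
        _ < 2 * (m * d) := by
          exact ENNReal.mul_lt_mul_left hmd0 hmd_top
            (lt_of_le_of_lt (ENNReal.inv_le_one.mpr one_le_two) one_lt_two)
    calc t * I + 2 * m * I = m * d * 2⁻¹ + 2 * m * I := by rw [htI]
      _ < 2 * (m * d) + 2 * m * I := by
          exact ENNReal.add_lt_add_right
            (ENNReal.mul_ne_top (ENNReal.mul_ne_top ENNReal.ofNat_ne_top hm_top) hI_top) h1
      _ = 2 * (m * (I + d)) := by ring
      _ ≤ 2 * (m * c) := by gcongr
      _ = 2 * (c * m) := by ring
  -- set up the competitor measure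
  set a : ℝ≥0∞ := 1 - t with hadef
  have ha : a + t = 1 := tsub_add_cancel_of_le ht1
  have ha1 : a ≤ 1 := tsub_le_self
  have ha_top : a ≠ ∞ := (ha1.trans_lt one_lt_top).ne
  set u : ℝ≥0∞ := 1 - t * m with hudef
  have htm : t * m ≤ 2⁻¹ := by
    calc t * m ≤ 2⁻¹ * 1 := by gcongr
      _ = 2⁻¹ := mul_one _
  have htm1 : t * m ≤ 1 := htm.trans (by norm_num)
  have hu : u + t * m = 1 := tsub_add_cancel_of_le htm1
  have hu0 : u ≠ 0 := by
    intro h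
    rw [h, zero_add] at hu
    rw [hu] at htm
    exact absurd htm (not_le.mpr (ENNReal.inv_lt_one.mpr one_lt_two))
  have hu1 : u ≤ 1 := tsub_le_self
  have hu_top : u ≠ ∞ := (hu1.trans_lt one_lt_top).ne
  set s : ℝ≥0∞ := u⁻¹ with hsdef
  have hsu : s * u = 1 := ENNReal.inv_mul_cancel hu0 hu_top
  have hs0 : s ≠ 0 := ENNReal.inv_ne_zero.mpr hu_top
  have hs_top : s ≠ ∞ := ENNReal.inv_ne_top.mpr hu0
  set ν : Measure Ω := s • (g + a • b) with hνdef
  -- ν is a probability measure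
  have hcompl : μ Bᶜ = 1 - m := by
    rw [measure_compl hB (by finiteness), measure_univ]
  have hgb_univ : (g + a • b) Set.univ = u := by
    have h1 : (g + a • b) Set.univ = (1 - m) + a * m := by
      simp [hgdef, hbdef, Measure.restrict_apply, hcompl, hmdef]
    have h2 : ((1 - m) + a * m) + t * m = 1 := by
      have : a * m + t * m = m := by
        rw [← add_mul, ha, one_mul]
      calc ((1 - m) + a * m) + t * m = (1 - m) + (a * m + t * m) := by ring
        _ = (1 - m) + m := by rw [this]
        _ = 1 := tsub_add_cancel_of_le hm1
    rw [h1]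
    rw [hudef]
    exact ENNReal.eq_sub_of_add_eq (ENNReal.mul_ne_top ht_top hm_top) h2
  have hν_prob : IsProbabilityMeasure ν := by
    constructor
    rw [hνdef, Measure.smul_apply, hgb_univ, smul_eq_mul, hsu]
  -- compute the energy of ν
  have hQ_inner : ∀ x, ∫⁻ y, K x y ∂(g + a • b) =
      (∫⁻ y, K x y ∂g) + a * ∫⁻ y, K x y ∂b := by
    intro x
    rw [lintegral_add_measure, lintegral_smul_measure, smul_eq_mul]
  set Q : ℝ≥0∞ := (Egg + a * Egb) + a * (Ebg + a * Ebb) with hQdef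
  have hQ : ∫⁻ x, ∫⁻ y, K x y ∂(g + a • b) ∂(g + a • b) = Q := by
    simp_rw [hQ_inner]
    rw [lintegral_add_measure, lintegral_smul_measure]
    rw [lintegral_add_left (hpotm g), lintegral_add_left (hpotm g)]
    rw [lintegral_const_mul' a _ ha_top, lintegral_const_mul' a _ ha_top, smul_eq_mul]
  have hEν : energy K ν = s * (s * Q) := by
    rw [energy, hνdef]
    simp_rw [lintegral_smul_measure, smul_eq_mul]
    rw [lintegral_const_mul' s _ hs_top, hQ]
  -- the key identity
  have hident : Q + 2 * t * P = I + t * t * Ebb := by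
    rw [hQdef, hP_split, hI_split, hsymE]
    have h2 : a * a + 2 * t = 1 + t * t := by
      have h3 : a * a + 2 * t * (a + t) = (a + t) * (a + t) + t * t := by ring
      rw [ha] at h3
      simpa using h3
    calc (Egg + a * Ebg) + a * (Ebg + a * Ebb) + 2 * t * (Ebb + Ebg)
        = Egg + (a + t) * Ebg + (a + t) * Ebg + (a * a + 2 * t) * Ebb := by ring
      _ = Egg + 1 * Ebg + 1 * Ebg + (1 + t * t) * Ebb := by rw [ha, h2]
      _ = (Ebb + Ebg) + (Ebg + Egg) + t * t * Ebb := by ring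
  -- u*u + 2*(t*m) ≥ 1
  have husq : 1 ≤ u * u + 2 * (t * m) := by
    calc (1 : ℝ≥0∞) = (u + t * m) * (u + t * m) := by rw [hu]; ring
      _ = u * u + (t * m) * (u + (u + t * m)) := by ring
      _ = u * u + (t * m) * (u + 1) := by rw [hu]
      _ ≤ u * u + (t * m) * (1 + 1) := by gcongr
      _ = u * u + 2 * (t * m) := by ring
  -- main strict inequality : Q < u * (u * I)
  have hQlt : Q < u * (u * I) := by
    have hfin2 : 2 * t * P + 2 * (t * m) * I ≠ ∞ := by
      refine ENNReal.add_ne_top.mpr ⟨?_, ?_⟩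
      · exact ENNReal.mul_ne_top (ENNReal.mul_ne_top (by norm_num) ht_top)
          (hP_le.trans_lt hI_top.lt_top).ne
      · exact ENNReal.mul_ne_top (ENNReal.mul_ne_top (by norm_num)
          (ENNReal.mul_ne_top ht_top hm_top)) hI_top
    rw [← ENNReal.add_lt_add_iff_right hfin2]
    have hLHS : Q + (2 * t * P + 2 * (t * m) * I) = (I + t * t * Ebb) + 2 * (t * m) * I := by
      rw [← add_assoc, hident]
    rw [hLHS]
    have hstep : (I + t * t * Ebb) + 2 * (t * m) * I < I + 2 * t * (c * m) := by
      rw [add_assoc]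
      refine ENNReal.add_lt_add_left hI_top ?_
      calc t * t * Ebb + 2 * (t * m) * I ≤ t * t * I + 2 * (t * m) * I := by gcongr
        _ = t * (t * I + 2 * m * I) := by ring
        _ < t * (2 * (c * m)) := by
            exact ENNReal.mul_lt_mul_right ht0 ht_top hcore
        _ = 2 * t * (c * m) := by ring
    refine hstep.trans_le ?_
    calc I + 2 * t * (c * m) ≤ (u * u + 2 * (t * m)) * I + 2 * t * (c * m) := by
          have hI' : I ≤ (u * u + 2 * (t * m)) * I := by
            calc I = 1 * I := (one_mul I).symm
              _ ≤ (u * u + 2 * (t * m)) * I := mul_le_mul_left husq I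
          exact add_le_add_left hI' _
      _ = (u * u * I + 2 * (t * m) * I) + 2 * t * (c * m) := by ring
      _ ≤ (u * u * I + 2 * (t * m) * I) + 2 * t * P := by
          gcongr
      _ = u * (u * I) + (2 * t * P + 2 * (t * m) * I) := by ring
  -- conclude
  have hEν_lt : energy K ν < I := by
    rw [hEν]
    calc s * (s * Q) < s * (s * (u * (u * I))) := by
          refine ENNReal.mul_lt_mul_right hs0 hs_top ?_
          exact ENNReal.mul_lt_mul_right hs0 hs_top hQlt
      _ = (s * u) * ((s * u) * I) := by ring
      _ = I := by rw [hsu]; ring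
  exact absurd (hmin ν hν_prob) (not_le.mpr hEν_lt)
end

section
/- Let (Ω,ρ) be a compact metric space and K : Ω × Ω → [0,∞] a symmetric extended-continuous kernel. If μ is a minimizing Borel probability measure for the energy I_K with I_K(μ) < ∞, then the set {x ∈ Ω : U_K^μ(x) < I_K(μ)} has K-capacity zero; i.e., every Borel probability measure ν supported in this set has I_K(ν) = ∞. -/
open MeasureTheory Metric Set ENNReal

/-- A measure on a second countable space gives zero mass to the complement of its support. -/
lemma msupp_ae {Ω : Type*} [TopologicalSpace Ω] [SecondCountableTopology Ω]
    [MeasurableSpace Ω] (ν : Measure Ω) : ν (msupp ν)ᶜ = 0 := by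
  set S : Set (Set Ω) := {V | IsOpen V ∧ ν V = 0} with hS
  obtain ⟨T, Tcount, TS, hT⟩ := TopologicalSpace.isOpen_sUnion_countable S (fun s hs => hs.1)
  have hsub : (msupp ν)ᶜ ⊆ ⋃₀ S := by
    intro x hx
    simp only [msupp, mem_compl_iff, mem_setOf_eq, not_forall] at hx
    obtain ⟨V, hV, hxV, hV0⟩ := hx
    exact ⟨V, ⟨hV, by simpa using hV0⟩, hxV⟩
  have : ν (⋃₀ S) = 0 := by
    rw [← hT]
    exact (measure_sUnion_null_iff Tcount).2 fun s hs => (TS hs).2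
  exact measure_mono_null hsub this

/-- If `μ` is an energy-minimizing probability measure of finite energy for a symmetric
extended-continuous kernel on a compact metric space, then the set where its potential is
strictly below its energy has capacity zero: every probability measure supported in this
set has infinite energy. -/
theorem exceptional_set_capacity_zero
    {Ω : Type*} [MetricSpace Ω] [CompactSpace Ω]
    [MeasurableSpace Ω] [BorelSpace Ω]
    (K : Ω → Ω → ℝ≥0∞) (hsym : ∀ x y, K x y = K y x)
    (hKcont : Continuous (Function.uncurry K))
    (μ : Measure Ω) [IsProbabilityMeasure μ]
    (hmin : ∀ ν : Measure Ω, IsProbabilityMeasure ν → energy K μ ≤ energy K ν)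
    (hfin : energy K μ ≠ ⊤) :
    ∀ ν : Measure Ω, IsProbabilityMeasure ν →
      msupp ν ⊆ {x | pot K μ x < energy K μ} → energy K ν = ⊤ := by
  intro ν hν hsupp
  by_contra hJfin
  have mK : Measurable (Function.uncurry K) := hKcont.measurable
  have mpotμ : Measurable (pot K μ) := Measurable.lintegral_prod_right mK
  have mpotν : Measurable (pot K ν) := Measurable.lintegral_prod_right mK
  -- ν-a.e. x is in the support
  have hae : ∀ᵐ x ∂ν, pot K μ x < energy K μ := by
    have h0 : ν (msupp ν)ᶜ = 0 := msupp_ae ν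
    filter_upwards [(ae_iff.2 (by exact h0) : ∀ᵐ x ∂ν, x ∈ msupp ν)] with x hx
    exact hsupp hx
  set I := energy K μ with hI
  set J := energy K ν with hJ
  set A := ∫⁻ x, pot K μ x ∂ν with hA
  have hAleI : A ≤ I := by
    calc A ≤ ∫⁻ _, I ∂ν := lintegral_mono_ae (hae.mono fun x hx => hx.le)
    _ = I := by simp
  have hAfin : A ≠ ⊤ := fun h => hfin (top_le_iff.1 (h ▸ hAleI))
  -- strict inequality A < I
  have hAltI : A < I := by
    rcases lt_or_eq_of_le hAleI with h | h
    · exact h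
    · exfalso
      have hsub : ∫⁻ x, (I - pot K μ x) ∂ν = I - A := by
        have := lintegral_sub mpotμ (by rwa [← hA] : ∫⁻ x, pot K μ x ∂ν ≠ ⊤)
          (hae.mono fun x hx => hx.le)
        simpa [hA] using this
      have hzero : ∫⁻ x, (I - pot K μ x) ∂ν = 0 := by rw [hsub, h]; simp
      rw [lintegral_eq_zero_iff (f := fun x => I - pot K μ x) (measurable_const.sub mpotμ)] at hzero
      have hfalse : ∀ᵐ _ ∂ν, False := by
        filter_upwards [hae, hzero] with x h1 h2
        exact absurd (tsub_eq_zero_iff_le.1 h2) (not_le.2 h1)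
      have : ν univ = 0 := by simpa [ae_iff] using hfalse
      simp [measure_univ] at this
  -- Tonelli / symmetry: ∫ pot K ν dμ = A
  have hswap : ∫⁻ x, pot K ν x ∂μ = A := by
    have hm : AEMeasurable (Function.uncurry fun x y => K y x) (μ.prod ν) :=
      (mK.comp measurable_swap).aemeasurable
    calc ∫⁻ x, pot K ν x ∂μ = ∫⁻ x, ∫⁻ y, K y x ∂ν ∂μ := by
          simp only [pot]; congr 1; ext x; congr 1; ext y; exact hsym x y
      _ = ∫⁻ y, ∫⁻ x, K y x ∂μ ∂ν := lintegral_lintegral_swap hm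
      _ = A := rfl
  -- real quantities
  set a := I.toReal with ha
  set b := A.toReal with hb
  set c := J.toReal with hc
  have hba : b < a := by
    rw [ha, hb]
    exact ENNReal.toReal_lt_toReal hAfin hfin |>.2 hAltI
  have hb0 : 0 ≤ b := ENNReal.toReal_nonneg
  have hc0 : 0 ≤ c := ENNReal.toReal_nonneg
  -- choose the perturbation parameter
  set s : ℝ := min (1/2 : ℝ) ((a - b) / (a + c + 1)) with hs
  have hapc : (0:ℝ) < a + c + 1 := by linarith [hb0, hba, hc0]
  have hs0 : 0 < s := lt_min (by norm_num) (div_pos (by linarith) hapc)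
  have hs1 : s ≤ 1 := (min_le_left _ _).trans (by norm_num)
  set t : NNReal := Real.toNNReal s with ht
  have htr : ((t : ℝ≥0∞)).toReal = s := by
    simp [ht, Real.coe_toNNReal s hs0.le]
  have ht1 : (t : ℝ≥0∞) ≤ 1 := by
    rw [← ENNReal.coe_one, ENNReal.coe_le_coe]
    exact Real.toNNReal_le_one.2 hs1
  have h1t_fin : (1 - (t : ℝ≥0∞)) ≠ ⊤ := (tsub_le_self.trans_lt one_lt_top).ne
  have htfin : (t : ℝ≥0∞) ≠ ⊤ := coe_ne_top
  have h1tr : ((1 : ℝ≥0∞) - t).toReal = 1 - s := by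
    rw [ENNReal.toReal_sub_of_le ht1 one_ne_top, ENNReal.toReal_one, htr]
  -- the perturbed measure
  set σ : Measure Ω := (1 - (t : ℝ≥0∞)) • μ + (t : ℝ≥0∞) • ν with hσ
  have hσprob : IsProbabilityMeasure σ := by
    constructor
    rw [hσ]
    simp [Measure.add_apply, Measure.smul_apply, measure_univ, smul_eq_mul,
      tsub_add_cancel_of_le ht1]
  -- expansion of the energy
  have hinner : ∀ x, ∫⁻ y, K x y ∂σ = (1 - (t:ℝ≥0∞)) * pot K μ x + t * pot K ν x := by
    intro x
    rw [hσ]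
    simp [lintegral_add_measure, lintegral_smul_measure, pot]
    rw [ENNReal.smul_def, smul_eq_mul]
  have hexp : energy K σ =
      (1 - (t:ℝ≥0∞)) * ((1 - (t:ℝ≥0∞)) * I + t * A) + t * ((1 - (t:ℝ≥0∞)) * A + t * J) := by
    have hf : Measurable fun x => (1 - (t:ℝ≥0∞)) * pot K μ x + t * pot K ν x :=
      (mpotμ.const_mul _).add (mpotν.const_mul _)
    calc energy K σ = ∫⁻ x, ((1 - (t:ℝ≥0∞)) * pot K μ x + t * pot K ν x) ∂σ := by
          unfold energy; exact lintegral_congr hinner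
      _ = (1 - (t:ℝ≥0∞)) * (∫⁻ x, ((1 - (t:ℝ≥0∞)) * pot K μ x + t * pot K ν x) ∂μ)
            + t * (∫⁻ x, ((1 - (t:ℝ≥0∞)) * pot K μ x + t * pot K ν x) ∂ν) := by
          rw [hσ, lintegral_add_measure, lintegral_smul_measure, lintegral_smul_measure, smul_eq_mul, smul_eq_mul]
      _ = (1 - (t:ℝ≥0∞)) * ((1 - (t:ℝ≥0∞)) * I + t * A) + t * ((1 - (t:ℝ≥0∞)) * A + t * J) := by
          rw [lintegral_add_left (mpotμ.const_mul _), lintegral_add_left (mpotμ.const_mul _),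
            lintegral_const_mul _ mpotμ, lintegral_const_mul _ mpotν,
            lintegral_const_mul _ mpotμ, lintegral_const_mul _ mpotν, hswap]
          rfl
  -- minimality inequality in ℝ≥0∞
  have hIneq : I ≤ (1 - (t:ℝ≥0∞)) * ((1 - (t:ℝ≥0∞)) * I + t * A)
      + t * ((1 - (t:ℝ≥0∞)) * A + t * J) := hexp ▸ hmin σ hσprob
  -- pass to ℝ
  have hterm1 : (1 - (t:ℝ≥0∞)) * I + t * A ≠ ⊤ :=
    (ENNReal.add_ne_top.2 ⟨ENNReal.mul_ne_top h1t_fin hfin, ENNReal.mul_ne_top htfin hAfin⟩)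
  have hterm2 : (1 - (t:ℝ≥0∞)) * A + t * J ≠ ⊤ :=
    (ENNReal.add_ne_top.2 ⟨ENNReal.mul_ne_top h1t_fin hAfin, ENNReal.mul_ne_top htfin hJfin⟩)
  have hRHSfin : (1 - (t:ℝ≥0∞)) * ((1 - (t:ℝ≥0∞)) * I + t * A)
      + t * ((1 - (t:ℝ≥0∞)) * A + t * J) ≠ ⊤ :=
    (ENNReal.add_ne_top.2 ⟨ENNReal.mul_ne_top h1t_fin hterm1, ENNReal.mul_ne_top htfin hterm2⟩)
  have hreal : a ≤ (1 - s) * ((1 - s) * a + s * b) + s * ((1 - s) * b + s * c) := by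
    have := (ENNReal.toReal_le_toReal hfin hRHSfin).2 hIneq
    rwa [ENNReal.toReal_add (ENNReal.mul_ne_top h1t_fin hterm1) (ENNReal.mul_ne_top htfin hterm2),
      ENNReal.toReal_mul, ENNReal.toReal_mul,
      ENNReal.toReal_add (ENNReal.mul_ne_top h1t_fin hfin) (ENNReal.mul_ne_top htfin hAfin),
      ENNReal.toReal_add (ENNReal.mul_ne_top h1t_fin hAfin) (ENNReal.mul_ne_top htfin hJfin),
      ENNReal.toReal_mul, ENNReal.toReal_mul, ENNReal.toReal_mul, ENNReal.toReal_mul,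
      h1tr, htr] at this
  -- derive the contradiction
  have hsle : s * (a + c + 1) ≤ a - b := by
    have : s ≤ (a - b) / (a + c + 1) := min_le_right _ _
    calc s * (a + c + 1) ≤ ((a - b) / (a + c + 1)) * (a + c + 1) := by
          exact mul_le_mul_of_nonneg_right this hapc.le
      _ = a - b := div_mul_cancel₀ _ hapc.ne'
  nlinarith [mul_pos hs0 (sub_pos.2 hba), sq_nonneg s, mul_nonneg hs0.le hb0,
    mul_nonneg (mul_nonneg hs0.le hs0.le) hb0, mul_le_mul_of_nonneg_left hsle hs0.le]
end

section
/- Let (Ω,ρ) be a compact metric space and K a symmetric nonnegative extended-continuous kernel. If μ and ν are two approximately K-invariant Borel probability measures, then I_K(μ) = I_K(ν). -/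
open MeasureTheory Metric Set ENNReal

/-- A set has `K`-capacity zero if every probability measure supported in it has
infinite `K`-energy. -/
def CapacityZero {Ω : Type*} [TopologicalSpace Ω] [MeasurableSpace Ω]
    (K : Ω → Ω → ℝ≥0∞) (E : Set Ω) : Prop :=
  ∀ ν : Measure Ω, IsProbabilityMeasure ν → msupp ν ⊆ E → energy K ν = ⊤

/-- A probability measure `μ` is approximately `K`-invariant if it has finite energy and
its potential equals a finite constant `M` outside a set of `K`-capacity zero. -/
def ApproxInvariant {Ω : Type*} [TopologicalSpace Ω] [MeasurableSpace Ω]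
    (K : Ω → Ω → ℝ≥0∞) (μ : Measure Ω) : Prop :=
  IsProbabilityMeasure μ ∧ energy K μ ≠ ⊤ ∧
    ∃ M : ℝ≥0∞, M ≠ ⊤ ∧ CapacityZero K {x | pot K μ x ≠ M}


lemma capzero_null {Ω : Type*} [MetricSpace Ω] [CompactSpace Ω]
    [MeasurableSpace Ω] [BorelSpace Ω]
    (K : Ω → Ω → ℝ≥0∞) {E : Set Ω} (hE : MeasurableSet E)
    (hcap : CapacityZero K E) (μ : Measure Ω) [IsProbabilityMeasure μ]
    (hfin : energy K μ ≠ ⊤) : μ E = 0 := by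
  by_contra h
  have hpos : 0 < μ E := pos_iff_ne_zero.mpr h
  have hEne : μ E ≠ ⊤ := (measure_lt_top μ E).ne
  obtain ⟨F, hFE, hFc, hFlt⟩ := hE.exists_isCompact_lt_add hEne (ε := μ E) h
  have hFpos : 0 < μ F := by
    by_contra hF
    push_neg at hF
    have : μ F = 0 := le_antisymm hF zero_le
    rw [this, zero_add] at hFlt
    exact lt_irrefl _ hFlt
  set c : ℝ≥0∞ := (μ F)⁻¹ with hc
  have hcne : c ≠ ⊤ := ENNReal.inv_ne_top.mpr hFpos.ne'
  have hFne : μ F ≠ ⊤ := (measure_lt_top μ F).ne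
  set ν' : Measure Ω := c • μ.restrict F with hν'
  have hprob : IsProbabilityMeasure ν' := by
    constructor
    rw [hν', Measure.smul_apply, smul_eq_mul, Measure.restrict_apply_univ,
      hc, ENNReal.inv_mul_cancel hFpos.ne' hFne]
  have hsupp : msupp ν' ⊆ E := by
    intro x hx
    by_contra hxF
    by_cases hxF' : x ∈ F
    · exact hxF (hFE hxF')
    · have hV : IsOpen Fᶜ := hFc.isClosed.isOpen_compl
      have := hx Fᶜ hV hxF'
      rw [hν', Measure.smul_apply, smul_eq_mul,
        Measure.restrict_apply hV.measurableSet] at this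
      simp [Set.compl_inter_self] at this
  have henergy : energy K ν' ≠ ⊤ := by
    have hle : energy K (μ.restrict F) ≤ energy K μ := by
      refine lintegral_mono' Measure.restrict_le_self fun x => ?_
      exact lintegral_mono' Measure.restrict_le_self le_rfl
    have : energy K ν' = c * (c * energy K (μ.restrict F)) := by
      rw [hν', energy, lintegral_smul_measure]
      congr 1
      simp_rw [lintegral_smul_measure]
      exact lintegral_const_mul' _ _ hcne
    rw [this]
    exact ENNReal.mul_ne_top hcne (ENNReal.mul_ne_top hcne
      (lt_of_le_of_lt hle (lt_top_iff_ne_top.mpr hfin)).ne)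
  exact henergy (hcap ν' hprob hsupp)

/-- Any two approximately `K`-invariant probability measures have equal energy. -/
theorem approxInvariant_energy_eq
    {Ω : Type*} [MetricSpace Ω] [CompactSpace Ω]
    [MeasurableSpace Ω] [BorelSpace Ω]
    (K : Ω → Ω → ℝ≥0∞) (hsym : ∀ x y, K x y = K y x)
    (hKcont : Continuous (Function.uncurry K))
    (μ ν : Measure Ω)
    (hμ : ApproxInvariant K μ) (hν : ApproxInvariant K ν) :
    energy K μ = energy K ν := by
  obtain ⟨hμp, hμfin, Mμ, hMμne, hμcap⟩ := hμ
  obtain ⟨hνp, hνfin, Mν, hMνne, hνcap⟩ := hν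
  haveI := hμp; haveI := hνp
  have hKm : Measurable (Function.uncurry K) := hKcont.measurable
  have hpotμ : Measurable (pot K μ) := Measurable.lintegral_prod_right hKm
  have hpotν : Measurable (pot K ν) := Measurable.lintegral_prod_right hKm
  have hEμ : MeasurableSet {x | pot K μ x ≠ Mμ} :=
    (hpotμ (measurableSet_singleton Mμ)).compl
  have hEν : MeasurableSet {x | pot K ν x ≠ Mν} :=
    (hpotν (measurableSet_singleton Mν)).compl
  -- a.e. equalities
  have hμμ : pot K μ =ᵐ[μ] fun _ => Mμ := capzero_null K hEμ hμcap μ hμfin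
  have hμν : pot K μ =ᵐ[ν] fun _ => Mμ := capzero_null K hEμ hμcap ν hνfin
  have hνν : pot K ν =ᵐ[ν] fun _ => Mν := capzero_null K hEν hνcap ν hνfin
  have hνμ : pot K ν =ᵐ[μ] fun _ => Mν := capzero_null K hEν hνcap μ hμfin
  have h1 : energy K μ = Mμ := by
    rw [energy, show (fun x => ∫⁻ y, K x y ∂μ) = pot K μ from rfl] at *
    calc ∫⁻ x, pot K μ x ∂μ = ∫⁻ _, Mμ ∂μ := lintegral_congr_ae hμμ
    _ = Mμ := by simp
  have h2 : energy K ν = Mν := by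
    calc energy K ν = ∫⁻ x, pot K ν x ∂ν := rfl
    _ = ∫⁻ _, Mν ∂ν := lintegral_congr_ae hνν
    _ = Mν := by simp
  have hswap : ∫⁻ x, pot K μ x ∂ν = ∫⁻ x, pot K ν x ∂μ := by
    have hae : AEMeasurable (Function.uncurry K) (ν.prod μ) := hKm.aemeasurable
    calc ∫⁻ x, ∫⁻ y, K x y ∂μ ∂ν = ∫⁻ y, ∫⁻ x, K x y ∂ν ∂μ :=
          lintegral_lintegral_swap hae
    _ = ∫⁻ y, ∫⁻ x, K y x ∂ν ∂μ := by
          refine lintegral_congr fun y => lintegral_congr fun x => hsym x y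
  have hM : Mμ = Mν := by
    have l1 : ∫⁻ x, pot K μ x ∂ν = Mμ := by
      rw [lintegral_congr_ae hμν]; simp
    have l2 : ∫⁻ x, pot K ν x ∂μ = Mν := by
      rw [lintegral_congr_ae hνμ]; simp
    rw [← l1, ← l2, hswap]
  rw [h1, h2, hM]
end

section
/- Let (Ω,ρ) be a compact connected metric space in which every nonempty ball has positive K-capacity, σ a fully supported probability measure, and K a symmetric extended-continuous kernel that is regular and entirely strictly subharmonic with respect to σ. Then every energy-minimizing Borel probability measure μ for I_K has full support, supp(μ) = Ω. -/
open MeasureTheory Metric Set ENNReal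

/-- `K` is regular. -/
def Regular {Ω : Type*} [TopologicalSpace Ω] [MeasurableSpace Ω] (K : Ω → Ω → ℝ≥0∞) : Prop :=
  ∀ ν : Measure Ω, IsFiniteMeasure ν →
    ContinuousOn (pot K ν) (msupp ν) → (∀ x ∈ msupp ν, pot K ν x ≠ ⊤) →
    Continuous (pot K ν) ∧ ∀ x, pot K ν x ≠ ⊤

/-- `K` is entirely strictly subharmonic with respect to `σ`. -/
def EntirelyStrictlySubharmonic {Ω : Type*} [MetricSpace Ω] [MeasurableSpace Ω]
    (σ : Measure Ω) (K : Ω → Ω → ℝ≥0∞) : Prop :=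
  ∃ R > (0 : ℝ), ∀ y : Ω,
    (∀ x, x ≠ y → K x y ≠ ⊤) ∧
    ∀ (x₀ : Ω) (r : ℝ), 0 < r → r < R → closedBall x₀ r ⊆ {y}ᶜ →
      K x₀ y < (∫⁻ z in closedBall x₀ r, K z y ∂σ) / σ (closedBall x₀ r)

section AuxMFS

open TopologicalSpace Filter Function

set_option linter.unusedSectionVars false

variable {Ω : Type*} [MetricSpace Ω] [CompactSpace Ω] [MeasurableSpace Ω] [BorelSpace Ω]
variable {K : Ω → Ω → ℝ≥0∞}

lemma MFS.pot_measurable (hK : Continuous (Function.uncurry K))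
    (ν : Measure Ω) [SFinite ν] : Measurable (pot K ν) :=
  hK.measurable.lintegral_prod_right'

lemma MFS.ae_mem_msupp (ν : Measure Ω) : ∀ᵐ x ∂ν, x ∈ msupp ν := by
  obtain ⟨B, hBc, -, hB⟩ := exists_countable_basis Ω
  have hN : ν (⋃₀ {s ∈ B | ν s = 0}) = 0 :=
    (measure_sUnion_null_iff (hBc.mono (sep_subset _ _))).2 (fun s hs => hs.2)
  refine ae_iff.2 (measure_mono_null ?_ hN)
  intro x hx
  simp only [mem_setOf_eq, msupp] at hx
  push_neg at hx
  obtain ⟨V, hVo, hxV, hV0⟩ := hx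
  obtain ⟨s, hsB, hxs, hsV⟩ := hB.exists_subset_of_mem_open hxV hVo
  exact ⟨s, ⟨hsB, le_antisymm ((measure_mono hsV).trans (le_of_eq (le_zero_iff.1 hV0))) zero_le⟩, hxs⟩

lemma MFS.msupp_restrict_subset (ν : Measure Ω) {F : Set Ω} (hF : IsClosed F) :
    msupp (ν.restrict F) ⊆ F := by
  intro x hx
  by_contra hxF
  have h := hx Fᶜ hF.isOpen_compl hxF
  rw [Measure.restrict_apply hF.isOpen_compl.measurableSet, compl_inter_self] at h
  simp at h

lemma MFS.iSup_min_nat (a : ℝ≥0∞) : (⨆ n : ℕ, min a n) = a := by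
  apply le_antisymm (iSup_le fun n => min_le_left _ _)
  rcases eq_or_ne a ⊤ with rfl | ha
  · have h : (⨆ n : ℕ, min (⊤ : ℝ≥0∞) n) = ⨆ n : ℕ, (n : ℝ≥0∞) := by
      refine iSup_congr fun n => ?_
      simp
    rw [h, ENNReal.iSup_natCast]
  · obtain ⟨n, hn⟩ := ENNReal.exists_nat_gt ha
    calc a = min a n := (min_eq_left hn.le).symm
    _ ≤ ⨆ n : ℕ, min a n := le_iSup (fun n : ℕ => min a (n : ℝ≥0∞)) n

lemma MFS.pot_lsc (hK : Continuous (Function.uncurry K)) (ν : Measure Ω) [IsFiniteMeasure ν] :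
    LowerSemicontinuous (pot K ν) := by
  have hKx : ∀ x : Ω, Continuous (K x) := fun x => hK.comp (Continuous.prodMk_right x)
  have key : ∀ n : ℕ, Continuous (fun x => ∫⁻ y, min (K x y) n ∂ν) := by
    intro n
    rw [continuous_iff_continuousAt]
    intro x
    refine tendsto_lintegral_filter_of_dominated_convergence (fun _ => (n : ℝ≥0∞)) ?_ ?_ ?_ ?_
    · exact Eventually.of_forall fun x' => ((hKx x').min continuous_const).measurable
    · exact Eventually.of_forall fun x' => ae_of_all _ fun y => min_le_right _ _
    · simp only [lintegral_const]
      exact ENNReal.mul_ne_top (by simp) (measure_ne_top ν univ)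
    · refine ae_of_all _ fun y => ?_
      have hc : Continuous (fun x' => min (K x' y) (n : ℝ≥0∞)) :=
        (hK.comp (continuous_id.prodMk continuous_const)).min continuous_const
      exact hc.tendsto x
  have hrepr : pot K ν = fun x => ⨆ n : ℕ, ∫⁻ y, min (K x y) n ∂ν := by
    funext x
    calc pot K ν x = ∫⁻ y, ⨆ n : ℕ, min (K x y) n ∂ν :=
          lintegral_congr fun y => (MFS.iSup_min_nat _).symm
    _ = ⨆ n : ℕ, ∫⁻ y, min (K x y) n ∂ν := by
        refine lintegral_iSup (fun n => ((hKx x).min continuous_const).measurable) ?_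
        intro n m hnm y
        exact min_le_min le_rfl (by exact_mod_cast hnm)
  rw [hrepr]
  exact lowerSemicontinuous_iSup fun n => (key n).lowerSemicontinuous

lemma MFS.energy_expand (hK : Continuous (Function.uncurry K)) (μ ν : Measure Ω)
    [SFinite μ] [SFinite ν] (a b : ℝ≥0∞) (ha : a ≠ ⊤) (hb : b ≠ ⊤) :
    energy K (a • μ + b • ν) =
      a * a * energy K μ + a * b * (∫⁻ x, pot K ν x ∂μ) +
        (b * a * (∫⁻ x, pot K μ x ∂ν) + b * b * energy K ν) := by
  have hm1 : Measurable (pot K μ) := MFS.pot_measurable hK μ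
  have hm2 : Measurable (pot K ν) := MFS.pot_measurable hK ν
  unfold energy pot
  simp only [lintegral_add_measure, lintegral_smul_measure, smul_eq_mul]
  have h1 : ∀ (ρ : Measure Ω), ∫⁻ x, (a * ∫⁻ y, K x y ∂μ + b * ∫⁻ y, K x y ∂ν) ∂ρ
      = a * ∫⁻ x, pot K μ x ∂ρ + b * ∫⁻ x, pot K ν x ∂ρ := by
    intro ρ
    show ∫⁻ x, (a * pot K μ x + b * pot K ν x) ∂ρ = _
    rw [lintegral_add_left (hm1.const_mul a), lintegral_const_mul' a _ ha,
      lintegral_const_mul' b _ hb]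
  rw [h1, h1]
  unfold pot
  ring

lemma MFS.key_ineq (hK : Continuous (Function.uncurry K)) (hsym : ∀ x y, K x y = K y x)
    (μ : Measure Ω) [IsProbabilityMeasure μ]
    (hmin : ∀ ν : Measure Ω, IsProbabilityMeasure ν → energy K μ ≤ energy K ν)
    (hIne : energy K μ ≠ ⊤)
    (ν : Measure Ω) (hν : IsProbabilityMeasure ν) (hEν : energy K ν ≠ ⊤) :
    energy K μ ≤ ∫⁻ x, pot K μ x ∂ν := by
  by_contra hlt
  push_neg at hlt
  set I := energy K μ with hI
  set J := ∫⁻ x, pot K μ x ∂ν with hJ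
  have hJne : J ≠ ⊤ := (hlt.trans (lt_top_iff_ne_top.2 hIne)).ne
  have hswap : ∫⁻ x, pot K ν x ∂μ = J := by
    unfold pot
    rw [lintegral_lintegral_swap hK.measurable.aemeasurable]
    refine lintegral_congr fun y => lintegral_congr fun x => (hsym x y).symm ▸ rfl
  set i := I.toReal with hi
  set j := J.toReal with hj
  set e := (energy K ν).toReal with he
  have hji : j < i := by
    rw [hi, hj]
    exact (ENNReal.toReal_lt_toReal hJne hIne).2 hlt
  have hj0 : 0 ≤ j := ENNReal.toReal_nonneg
  have he0 : 0 ≤ e := ENNReal.toReal_nonneg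
  set t : ℝ := min (1/2) ((i - j)/(i + e + 1)) with ht
  have hC : (0:ℝ) < i + e + 1 := by nlinarith
  have ht0 : 0 < t := lt_min (by norm_num) (div_pos (by linarith) hC)
  have thalf : t ≤ 1/2 := min_le_left _ _
  have htC : t * (i + e + 1) ≤ i - j := by
    rw [← le_div_iff₀ hC]
    exact min_le_right _ _
  set t' : ℝ≥0∞ := ENNReal.ofReal t with ht'
  have ht'top : t' ≠ ⊤ := ofReal_ne_top
  have ht'1 : t' ≤ 1 := by
    rw [ht', ← ENNReal.ofReal_one]
    exact ENNReal.ofReal_le_ofReal (by linarith)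
  set a : ℝ≥0∞ := 1 - t' with ha
  have hatop : a ≠ ⊤ := by
    rw [ha]
    exact (tsub_le_self.trans_lt one_lt_top).ne
  set μt : Measure Ω := a • μ + t' • ν with hμt
  have hprob : IsProbabilityMeasure μt := by
    constructor
    rw [hμt, Measure.add_apply, Measure.smul_apply, Measure.smul_apply,
      smul_eq_mul, smul_eq_mul, measure_univ, measure_univ, mul_one, mul_one,
      ha, tsub_add_cancel_of_le ht'1]
  have hexp := MFS.energy_expand hK μ ν a t' hatop ht'top
  rw [hswap] at hexp
  have hle : I ≤ a * a * I + a * t' * J + (t' * a * J + t' * t' * energy K ν) :=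
    hexp ▸ hmin μt hprob
  have hRne : a * a * I + a * t' * J + (t' * a * J + t' * t' * energy K ν) ≠ ⊤ := by
    refine ENNReal.add_ne_top.2 ⟨ENNReal.add_ne_top.2 ⟨?_, ?_⟩, ENNReal.add_ne_top.2 ⟨?_, ?_⟩⟩
    all_goals exact ENNReal.mul_ne_top (ENNReal.mul_ne_top (by assumption) (by assumption)) (by assumption)
  have hler := (ENNReal.toReal_le_toReal hIne hRne).2 hle
  have hta : a.toReal = 1 - t := by
    rw [ha, ENNReal.toReal_sub_of_le ht'1 one_ne_top, ENNReal.toReal_one, ht',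
      ENNReal.toReal_ofReal ht0.le]
  have htt : t'.toReal = t := ENNReal.toReal_ofReal ht0.le
  rw [ENNReal.toReal_add (ENNReal.add_ne_top.2 ⟨ENNReal.mul_ne_top (ENNReal.mul_ne_top hatop hatop) hIne, ENNReal.mul_ne_top (ENNReal.mul_ne_top hatop ht'top) hJne⟩)
      (ENNReal.add_ne_top.2 ⟨ENNReal.mul_ne_top (ENNReal.mul_ne_top ht'top hatop) hJne, ENNReal.mul_ne_top (ENNReal.mul_ne_top ht'top ht'top) hEν⟩),
    ENNReal.toReal_add (ENNReal.mul_ne_top (ENNReal.mul_ne_top hatop hatop) hIne) (ENNReal.mul_ne_top (ENNReal.mul_ne_top hatop ht'top) hJne),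
    ENNReal.toReal_add (ENNReal.mul_ne_top (ENNReal.mul_ne_top ht'top hatop) hJne) (ENNReal.mul_ne_top (ENNReal.mul_ne_top ht'top ht'top) hEν)] at hler
  simp only [ENNReal.toReal_mul, hta, htt, ← hi, ← hj, ← he] at hler
  nlinarith [mul_le_mul_of_nonneg_left htC ht0.le, mul_nonneg ht0.le hj0,
    mul_nonneg (mul_nonneg ht0.le ht0.le) hj0, sq_nonneg t, mul_pos ht0 (sub_pos.2 hji)]

lemma MFS.avg_bound (σ : Measure Ω) [IsProbabilityMeasure σ]
    (hK : Continuous (Function.uncurry K))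
    (ρ : Measure Ω) [SFinite ρ] (B : Set Ω) (hσB0 : 0 < σ B)
    (M : ℝ≥0∞) (hM : ∀ z, pot K ρ z ≤ M) :
    ∫⁻ y, (∫⁻ z in B, K z y ∂σ) / σ B ∂ρ ≤ M := by
  have hm : Measurable (Function.uncurry fun (y z : Ω) => K z y) :=
    hK.measurable.comp measurable_swap
  calc ∫⁻ y, (∫⁻ z in B, K z y ∂σ) / σ B ∂ρ
      = (∫⁻ y, ∫⁻ z in B, K z y ∂σ ∂ρ) / σ B := by
        simp only [div_eq_mul_inv]
        exact lintegral_mul_const' _ _ (ENNReal.inv_ne_top.2 hσB0.ne')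
  _ = (∫⁻ z in B, pot K ρ z ∂σ) / σ B := by
        rw [lintegral_lintegral_swap hm.aemeasurable]
        rfl
  _ ≤ (M * σ B) / σ B := by
        apply ENNReal.div_le_div_right
        calc ∫⁻ z in B, pot K ρ z ∂σ ≤ ∫⁻ _ in B, M ∂σ :=
              setLIntegral_mono measurable_const (fun z _ => hM z)
        _ = M * σ B := setLIntegral_const B M
  _ = M := by rw [mul_div_assoc, ENNReal.div_self hσB0.ne' (measure_ne_top σ B), mul_one]

lemma MFS.restrict_pot_le
    (σ : Measure Ω) [IsProbabilityMeasure σ]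
    (hσfull : ∀ (x : Ω) (r : ℝ), 0 < r → 0 < σ (closedBall x r))
    (hK : Continuous (Function.uncurry K))
    (hreg : Regular K)
    {R : ℝ} (hR : 0 < R)
    (hsub : ∀ y : Ω, ∀ (x₀ : Ω) (r : ℝ), 0 < r → r < R → closedBall x₀ r ⊆ {y}ᶜ →
      K x₀ y < (∫⁻ z in closedBall x₀ r, K z y ∂σ) / σ (closedBall x₀ r))
    (μ : Measure Ω) [IsFiniteMeasure μ] (I : ℝ≥0∞) (hIne : I ≠ ⊤)
    {F : Set Ω} (hFc : IsCompact F) (hFI : ∀ x ∈ F, pot K μ x = I) (hFpos : 0 < μ F) :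
    ∀ x, pot K (μ.restrict F) x ≤ I := by
  set ρ := μ.restrict F with hρdef
  have hFm : MeasurableSet F := hFc.isClosed.measurableSet
  have hsum : ∀ x, pot K ρ x + pot K (μ.restrict Fᶜ) x = pot K μ x := by
    intro x
    unfold pot
    rw [hρdef, ← lintegral_add_measure, Measure.restrict_add_restrict_compl hFm]
  have hρle : ∀ x ∈ F, pot K ρ x ≤ I := by
    intro x hx
    rw [← hFI x hx, ← hsum x]
    exact le_self_add
  have hlsc1 : LowerSemicontinuous (pot K ρ) := MFS.pot_lsc hK ρ
  have hlsc2 : LowerSemicontinuous (pot K (μ.restrict Fᶜ)) := MFS.pot_lsc hK _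
  have hcontF : ContinuousOn (pot K ρ) F := by
    intro x hx
    refine tendsto_order.2 ⟨fun c hc => (hlsc1 x c hc).filter_mono nhdsWithin_le_nhds,
      fun b hb => ?_⟩
    rcases lt_or_ge I b with hbI | hbI
    · exact eventually_nhdsWithin_of_forall fun y hy => (hρle y hy).trans_lt hbI
    · have hxI : pot K ρ x + pot K (μ.restrict Fᶜ) x = I := by rw [hsum x, hFI x hx]
      have hbtop : b ≠ ⊤ := (hbI.trans_lt (lt_top_iff_ne_top.2 hIne)).ne
      have h2top : pot K (μ.restrict Fᶜ) x ≠ ⊤ := by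
        refine ((le_add_self.trans hxI.le).trans_lt (lt_top_iff_ne_top.2 hIne)).ne
      have hhx : I - b < pot K (μ.restrict Fᶜ) x := by
        rw [ENNReal.sub_lt_iff_lt_right hbtop hbI]
        calc I = pot K ρ x + pot K (μ.restrict Fᶜ) x := hxI.symm
        _ < b + pot K (μ.restrict Fᶜ) x := ENNReal.add_lt_add_right h2top hb
        _ = pot K (μ.restrict Fᶜ) x + b := add_comm _ _
      have hev := (hlsc2 x (I - b) hhx).filter_mono (nhdsWithin_le_nhds (s := F))
      refine hev.mp (eventually_mem_nhdsWithin.mono ?_)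
      intro y hyF hy2
      by_contra hge
      push_neg at hge
      have h1 : pot K ρ y + pot K (μ.restrict Fᶜ) y = I := by rw [hsum y, hFI y hyF]
      have hlt : I < I := by
        calc I = b + (I - b) := (add_tsub_cancel_of_le hbI).symm
        _ < pot K ρ y + pot K (μ.restrict Fᶜ) y :=
            ENNReal.add_lt_add_of_le_of_lt hbtop hge hy2
        _ = I := h1
      exact absurd hlt (lt_irrefl I)
  have hsupp := MFS.msupp_restrict_subset μ hFc.isClosed
  have hfin : ∀ x ∈ msupp ρ, pot K ρ x ≠ ⊤ := fun x hx =>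
    ((hρle x (hsupp hx)).trans_lt (lt_top_iff_ne_top.2 hIne)).ne
  obtain ⟨hgc, hgfin⟩ := hreg ρ inferInstance (hcontF.mono hsupp) hfin
  have hFne : F.Nonempty := nonempty_iff_ne_empty.2 (fun h => by
    rw [h] at hFpos; simp at hFpos)
  obtain ⟨xM, -, hxMmax⟩ := isCompact_univ.exists_isMaxOn ⟨hFne.some, mem_univ _⟩ hgc.continuousOn
  have hxM' : ∀ y, pot K ρ y ≤ pot K ρ xM := fun y => hxMmax (mem_univ y)
  by_cases hxMF : xM ∈ F
  · exact fun x => (hxM' x).trans (hρle xM hxMF)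
  · exfalso
    have hd : 0 < infDist xM F := (hFc.isClosed.notMem_iff_infDist_pos hFne).1 hxMF
    set r : ℝ := min (R/2) (infDist xM F / 2) with hrdef
    have hr0 : 0 < r := lt_min (by linarith) (by linarith)
    have hrR : r < R := (min_le_left _ _).trans_lt (by linarith)
    have hBF : ∀ y ∈ F, closedBall xM r ⊆ {y}ᶜ := by
      intro y hy z hz
      simp only [mem_compl_iff, mem_singleton_iff]
      intro hzy
      subst hzy
      have h1 : infDist xM F ≤ dist xM z := infDist_le_dist_of_mem hy
      have h2 : dist z xM ≤ r := mem_closedBall.1 hz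
      rw [dist_comm] at h1
      have h3 : r ≤ infDist xM F / 2 := min_le_right _ _
      linarith
    set B := closedBall xM r with hBdef
    have hσB0 : 0 < σ B := hσfull xM r hr0
    have hρ0 : ρ ≠ 0 := by
      intro h0
      have h1 : μ F = 0 := by
        have h2 := congrArg (fun m : Measure Ω => m univ) h0
        simpa [hρdef, Measure.restrict_apply_univ] using h2
      exact hFpos.ne' h1
    have hm : Measurable (Function.uncurry fun (y z : Ω) => K z y) :=
      hK.measurable.comp measurable_swap
    have hstrict : pot K ρ xM < ∫⁻ y, (∫⁻ z in B, K z y ∂σ) / σ B ∂ρ := by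
      refine lintegral_strict_mono hρ0 (hm.lintegral_prod_right'.div_const _).aemeasurable
        (hgfin xM) ?_
      refine (ae_restrict_mem hFm).mono fun y hy => ?_
      exact hsub y xM r hr0 hrR (hBF y hy)
    have hbnd := MFS.avg_bound σ hK ρ B hσB0 (pot K ρ xM) hxM'
    exact absurd (hstrict.trans_le hbnd) (lt_irrefl _)

end AuxMFS

/-- For a regular, entirely strictly subharmonic, symmetric extended-continuous kernel on
a compact connected metric space in which every nonempty ball has positive capacity,
every energy-minimizing probability measure has full support. -/
theorem minimizer_full_support
    {Ω : Type*} [MetricSpace Ω] [CompactSpace Ω] [ConnectedSpace Ω]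
    [MeasurableSpace Ω] [BorelSpace Ω]
    (σ : Measure Ω) [IsProbabilityMeasure σ]
    (hσfull : ∀ (x : Ω) (r : ℝ), 0 < r → 0 < σ (closedBall x r))
    (K : Ω → Ω → ℝ≥0∞) (hsym : ∀ x y, K x y = K y x)
    (hKcont : Continuous (Function.uncurry K))
    (hreg : Regular K) (hsubh : EntirelyStrictlySubharmonic σ K)
    (hballcap : ∀ (x : Ω) (r : ℝ), 0 < r → ∃ ν : Measure Ω, IsProbabilityMeasure ν ∧
      msupp ν ⊆ closedBall x r ∧ energy K ν ≠ ⊤)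
    (μ : Measure Ω) [IsProbabilityMeasure μ]
    (hmin : ∀ ν : Measure Ω, IsProbabilityMeasure ν → energy K μ ≤ energy K ν) :
    msupp μ = Set.univ := by
  obtain ⟨R, hR, hsubh'⟩ := hsubh
  have hPm : Measurable (pot K μ) := MFS.pot_measurable hKcont μ
  set I := energy K μ with hIdef
  -- finiteness of the minimal energy
  have hIne : I ≠ ⊤ := by
    obtain ⟨ν₀, hν₀p, -, hν₀e⟩ := hballcap (Classical.arbitrary Ω) 1 one_pos
    exact ((hmin ν₀ hν₀p).trans_lt (lt_top_iff_ne_top.2 hν₀e)).ne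
  have hIint : ∫⁻ x, pot K μ x ∂μ = I := rfl
  -- sublevel sets of the potential are null
  have hsub0 : ∀ c, c < I → μ {x | pot K μ x ≤ c} = 0 := by
    intro c hc
    by_contra hm0
    set E := {x | pot K μ x ≤ c} with hE
    have hEm : MeasurableSet E := hPm measurableSet_Iic
    have hmtop : μ E ≠ ⊤ := measure_ne_top μ E
    have hitop : (μ E)⁻¹ ≠ ⊤ := ENNReal.inv_ne_top.2 hm0
    set ν := (μ E)⁻¹ • μ.restrict E with hν
    have hprob : IsProbabilityMeasure ν := by
      constructor
      rw [hν, Measure.smul_apply, smul_eq_mul, Measure.restrict_apply_univ]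
      exact ENNReal.inv_mul_cancel hm0 hmtop
    have hrestr_le : energy K (μ.restrict E) ≤ I := by
      unfold energy
      exact lintegral_mono' Measure.restrict_le_self
        (fun x => lintegral_mono' Measure.restrict_le_self le_rfl)
    have hEνne : energy K ν ≠ ⊤ := by
      have heq : energy K ν = (μ E)⁻¹ * ((μ E)⁻¹ * energy K (μ.restrict E)) := by
        unfold energy
        rw [hν]
        simp only [lintegral_smul_measure, smul_eq_mul]
        rw [lintegral_const_mul' _ _ hitop]
      rw [heq]
      exact ENNReal.mul_ne_top hitop (ENNReal.mul_ne_top hitop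
        ((hrestr_le.trans_lt (lt_top_iff_ne_top.2 hIne)).ne))
    have hkey := MFS.key_ineq hKcont hsym μ hmin hIne ν hprob hEνne
    have hJle : ∫⁻ x, pot K μ x ∂ν ≤ c := by
      rw [hν, lintegral_smul_measure, smul_eq_mul]
      have h1 : ∫⁻ x in E, pot K μ x ∂μ ≤ c * μ E := by
        calc ∫⁻ x in E, pot K μ x ∂μ ≤ ∫⁻ _ in E, c ∂μ :=
              setLIntegral_mono measurable_const (fun x hx => hx)
        _ = c * μ E := setLIntegral_const E c
      calc (μ E)⁻¹ * ∫⁻ x in E, pot K μ x ∂μ ≤ (μ E)⁻¹ * (c * μ E) := mul_le_mul_right h1 _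
      _ = c * ((μ E)⁻¹ * μ E) := by ring
      _ = c := by rw [ENNReal.inv_mul_cancel hm0 hmtop, mul_one]
    exact absurd (hkey.trans hJle) (not_le.2 hc)
  -- the potential equals I a.e.
  have hnull : μ {x | pot K μ x < I} = 0 := by
    rcases eq_or_ne I 0 with hI0 | hI0
    · have : {x | pot K μ x < I} = ∅ := by
        ext x; simp [hI0]
      simp [this]
    · have hcover : {x | pot K μ x < I} ⊆ ⋃ n : ℕ, {x | pot K μ x ≤ I - ((n:ℝ≥0∞))⁻¹} := by
        intro x hx
        have hpos : I - pot K μ x ≠ 0 := by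
          simp only [ne_eq, tsub_eq_zero_iff_le, not_le]
          exact hx
        obtain ⟨n, hn⟩ := ENNReal.exists_inv_nat_lt hpos
        refine mem_iUnion.2 ⟨n, ?_⟩
        have hntop : ((n:ℝ≥0∞))⁻¹ ≠ ⊤ :=
          ((hn.trans_le tsub_le_self).trans (lt_top_iff_ne_top.2 hIne)).ne
        have hadd : ((n:ℝ≥0∞))⁻¹ + pot K μ x ≤ I := by
          rw [add_comm]
          exact (lt_tsub_iff_left.1 hn).le
        exact ENNReal.le_sub_of_add_le_left hntop hadd
      refine measure_mono_null hcover (measure_iUnion_null fun n => hsub0 _ ?_)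
      exact ENNReal.sub_lt_self hIne hI0 (ENNReal.inv_ne_zero.2 (natCast_ne_top n))
  have hael : ∀ᵐ x ∂μ, I ≤ pot K μ x := by
    rw [ae_iff]
    simpa [not_le] using hnull
  have haeq : ∀ᵐ x ∂μ, pot K μ x = I := by
    have h := ae_eq_of_ae_le_of_lintegral_le (μ := μ) (f := fun _ => I) (g := pot K μ)
      hael (by simpa using hIne) hPm.aemeasurable (by rw [hIint]; simp)
    exact h.mono fun x hx => hx.symm
  -- the set where the potential equals I
  set S := {x | pot K μ x = I} with hS
  have hSm : MeasurableSet S := hPm (measurableSet_singleton I)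
  have hSfull : μ Sᶜ = 0 := by
    have := ae_iff.1 haeq
    simpa [hS, Set.compl_setOf] using this
  have hμS : μ S = 1 := by
    have h1 : μ S + μ Sᶜ = 1 := by
      rw [measure_add_measure_compl hSm, measure_univ]
    rwa [hSfull, add_zero] at h1
  -- pot ≤ I everywhere via compact exhaustion and the maximum principle
  have hpotle : ∀ x, pot K μ x ≤ I := by
    have hex : ∀ n : ℕ, ∃ F, F ⊆ S ∧ IsCompact F ∧ 1 - ((n:ℝ≥0∞)+2)⁻¹ ≤ μ F := by
      intro n
      obtain ⟨F, hF1, hF2, hF3⟩ := hSm.exists_isCompact_lt_add (measure_ne_top μ S)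
        (ε := ((n:ℝ≥0∞)+2)⁻¹) (by simp)
      refine ⟨F, hF1, hF2, ?_⟩
      rw [hμS] at hF3
      exact tsub_le_iff_right.2 hF3.le
    choose F hFS hFc hFge using hex
    set G : ℕ → Set Ω := fun n => Set.accumulate F n with hG
    have hGc : ∀ n, IsCompact (G n) := fun n => by
      simp only [hG, Set.accumulate_def]
      exact (finite_Iic n).isCompact_biUnion (fun k _ => hFc k)
    have hGS : ∀ n, G n ⊆ S := fun n => by
      simp only [hG, Set.accumulate_def]
      exact iUnion₂_subset fun k _ => hFS k
    have hGge : ∀ n : ℕ, 1 - ((n:ℝ≥0∞)+2)⁻¹ ≤ μ (G n) := fun n =>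
      (hFge n).trans (measure_mono (Set.subset_accumulate))
    have hGpos : ∀ n, 0 < μ (G n) := by
      intro n
      have h2 : (0:ℝ≥0∞) < 1 - ((n:ℝ≥0∞)+2)⁻¹ := by
        refine tsub_pos_of_lt (ENNReal.inv_lt_one.2 ?_)
        exact ENNReal.one_lt_two.trans_le le_add_self
      exact h2.trans_le (hGge n)
    have hGmono : Monotone G := Set.monotone_accumulate
    have hmaxF : ∀ n, ∀ x, pot K (μ.restrict (G n)) x ≤ I := fun n =>
      MFS.restrict_pot_le σ hσfull hKcont hreg hR (fun y => (hsubh' y).2) μ I hIne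
        (hGc n) (fun z hz => hGS n hz) (hGpos n)
    intro x
    have hUm : MeasurableSet (⋃ n, G n) := MeasurableSet.iUnion fun n => (hGc n).isClosed.measurableSet
    have hUc : μ (⋃ n, G n)ᶜ = 0 := by
      by_contra h0
      obtain ⟨n, hn⟩ := ENNReal.exists_inv_nat_lt h0
      have hle : μ (⋃ k, G k)ᶜ ≤ ((n:ℝ≥0∞)+2)⁻¹ := by
        calc μ (⋃ k, G k)ᶜ ≤ μ (G n)ᶜ := measure_mono (compl_subset_compl.2 (subset_iUnion G n))
        _ = 1 - μ (G n) := by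
            rw [measure_compl (hGc n).isClosed.measurableSet (measure_ne_top μ _), measure_univ]
        _ ≤ 1 - (1 - ((n:ℝ≥0∞)+2)⁻¹) := tsub_le_tsub le_rfl (hGge n)
        _ ≤ ((n:ℝ≥0∞)+2)⁻¹ := by
            rw [ENNReal.sub_sub_cancel one_ne_top (ENNReal.inv_le_one.2 (one_le_two.trans le_add_self))]
      have h2 : ((n:ℝ≥0∞)+2)⁻¹ ≤ ((n:ℝ≥0∞))⁻¹ := ENNReal.inv_le_inv' le_self_add
      exact absurd (hn.trans_le hle) (not_lt.2 h2)
    have hKxm : Measurable (fun y => K x y) := (hKcont.comp (Continuous.prodMk_right x)).measurable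
    have hsplit : pot K μ x = ∫⁻ y in (⋃ n, G n), K x y ∂μ := by
      have h0 : ∫⁻ y in (⋃ n, G n)ᶜ, K x y ∂μ = 0 := by
        rw [Measure.restrict_eq_zero.2 hUc]
        simp
      unfold pot
      rw [← lintegral_add_compl (fun y => K x y) hUm, h0, add_zero]
    rw [hsplit]
    have hind : ∀ y, (⋃ n, G n).indicator (fun y => K x y) y
        = ⨆ n, (G n).indicator (fun y => K x y) y := by
      intro y
      by_cases hy : y ∈ ⋃ n, G n
      · obtain ⟨n, hn⟩ := mem_iUnion.1 hy
        rw [indicator_of_mem hy]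
        apply le_antisymm
        · calc K x y = (G n).indicator (fun y => K x y) y := (indicator_of_mem hn _).symm
          _ ≤ ⨆ n, (G n).indicator (fun y => K x y) y := le_iSup (fun k => (G k).indicator (fun y => K x y) y) n
        · exact iSup_le fun k => indicator_le_self' (fun _ _ => zero_le) y
      · rw [indicator_of_notMem hy]
        simp only [mem_iUnion, not_exists] at hy
        simp [indicator_of_notMem (hy _)]
    calc ∫⁻ y in ⋃ n, G n, K x y ∂μ
        = ∫⁻ y, (⋃ n, G n).indicator (fun y => K x y) y ∂μ := (lintegral_indicator hUm _).symm
    _ = ∫⁻ y, ⨆ n, (G n).indicator (fun y => K x y) y ∂μ := lintegral_congr hind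
    _ = ⨆ n, ∫⁻ y, (G n).indicator (fun y => K x y) y ∂μ :=
        lintegral_iSup (fun n => hKxm.indicator (hGc n).isClosed.measurableSet)
          (fun n m hnm y => indicator_le_indicator_of_subset (hGmono hnm) (fun _ => zero_le) y)
    _ ≤ I := iSup_le fun n => by
        rw [lintegral_indicator (hGc n).isClosed.measurableSet]
        exact hmaxF n x
  -- final contradiction: a point of {pot = I} off the support
  by_contra hne
  obtain ⟨x₀, hx₀⟩ := (ne_univ_iff_exists_notMem _).1 hne
  simp only [msupp, mem_setOf_eq] at hx₀
  push_neg at hx₀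
  obtain ⟨V, hVo, hx₀V, hV0⟩ := hx₀
  have hVnull : μ V = 0 := le_zero_iff.1 hV0
  obtain ⟨ε, hε0, hball⟩ := Metric.isOpen_iff.1 hVo x₀ hx₀V
  obtain ⟨ν, hνp, hνsupp, hνe⟩ := hballcap x₀ (ε/4) (by linarith)
  have hkey := MFS.key_ineq hKcont hsym μ hmin hIne ν hνp hνe
  have hJle : ∫⁻ x, pot K μ x ∂ν ≤ I := by
    calc ∫⁻ x, pot K μ x ∂ν ≤ ∫⁻ _, I ∂ν := lintegral_mono hpotle
    _ = I := by simp
  have haeν : ∀ᵐ x ∂ν, pot K μ x = I := by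
    refine ae_eq_of_ae_le_of_lintegral_le (μ := ν) (f := pot K μ) (g := fun _ => I)
      (ae_of_all _ hpotle) ((hJle.trans_lt (lt_top_iff_ne_top.2 hIne)).ne)
      aemeasurable_const ?_
    calc ∫⁻ _, I ∂ν = I := by simp
    _ ≤ ∫⁻ x, pot K μ x ∂ν := hkey
  have hν0 : ν ≠ 0 := hνp.ne_zero
  haveI : Filter.NeBot (ae ν) := ae_neBot.2 hν0
  obtain ⟨x₁, hx₁I, hx₁s⟩ := (haeν.and (MFS.ae_mem_msupp ν)).exists
  have hx₁b : x₁ ∈ closedBall x₀ (ε/4) := hνsupp hx₁s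
  set r₁ : ℝ := min (R/2) (ε/4) with hr₁
  have hr₁0 : 0 < r₁ := lt_min (by linarith) (by linarith)
  have hr₁R : r₁ < R := (min_le_left _ _).trans_lt (by linarith)
  have hB₁V : closedBall x₁ r₁ ⊆ V := by
    intro z hz
    apply hball
    rw [mem_ball]
    have h1 : dist z x₁ ≤ ε/4 := (mem_closedBall.1 hz).trans (min_le_right _ _)
    have h2 : dist x₁ x₀ ≤ ε/4 := mem_closedBall.1 hx₁b
    calc dist z x₀ ≤ dist z x₁ + dist x₁ x₀ := dist_triangle _ _ _
    _ ≤ ε/4 + ε/4 := add_le_add h1 h2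
    _ < ε := by linarith
  have hsupV : ∀ y ∈ msupp μ, closedBall x₁ r₁ ⊆ ({y}ᶜ : Set Ω) := by
    intro y hy z hz
    simp only [mem_compl_iff, mem_singleton_iff]
    intro hzy
    subst hzy
    exact absurd hVnull (hy V hVo (hB₁V hz)).ne'
  set B := closedBall x₁ r₁ with hBdef
  have hσB0 : 0 < σ B := hσfull x₁ r₁ hr₁0
  have hmsw : Measurable (Function.uncurry fun (y z : Ω) => K z y) :=
    hKcont.measurable.comp measurable_swap
  have hstrict : pot K μ x₁ < ∫⁻ y, (∫⁻ z in B, K z y ∂σ) / σ B ∂μ := by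
    refine lintegral_strict_mono (IsProbabilityMeasure.ne_zero μ)
      (hmsw.lintegral_prod_right'.div_const _).aemeasurable ?_ ?_
    · show pot K μ x₁ ≠ ⊤
      rw [hx₁I]
      exact hIne
    · refine (MFS.ae_mem_msupp μ).mono fun y hy => ?_
      exact (hsubh' y).2 x₁ r₁ hr₁0 hr₁R (hsupV y hy)
  have hbnd := MFS.avg_bound σ hKcont μ B hσB0 I hpotle
  rw [hx₁I] at hstrict
  exact absurd (hstrict.trans_le hbnd) (lt_irrefl I)
end

section
/- On the flat d-torus 𝕋^d, for s = −2 a Borel probability measure μ minimizes the Riesz energy I_{K_{-2}}(μ) = −∫∫ ρ(x,y)² dμ(x) dμ(y) if and only if for each coordinate 1 ≤ i ≤ d, the pushforward μ_i of μ under the i-th coordinate projection to 𝕊¹ is of the form (δ_z + δ_{−z})/2 for some z ∈ 𝕊¹ (where −z denotes the antipodal point). -/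
open MeasureTheory Set ENNReal

noncomputable section

instance : Fact (0 < 2 * Real.pi) := ⟨by positivity⟩

/-- The flat `d`-torus `(ℝ/2πℤ)^d = (𝕊¹)^d`. -/
abbrev Torus (d : ℕ) := Fin d → AddCircle (2 * Real.pi)

/-- The flat (Euclidean quotient) metric on the torus. -/
def tdist {d : ℕ} (x y : Torus d) : ℝ := Real.sqrt (∑ i, dist (x i) (y i) ^ 2)

/-- The Riesz energy for `s = -2`: `I(μ) = −∫∫ ρ(x,y)² dμ dμ`. -/
def negSqEnergy {d : ℕ} (μ : Measure (Torus d)) : ℝ :=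
  -∫ x, ∫ y, tdist x y ^ 2 ∂μ ∂μ

namespace RieszAux

open Real

local notation "𝕊" => AddCircle (2 * Real.pi)

def tr (θ : 𝕊) : ℝ := Real.Angle.toReal θ
lemma tr_mem_Ioc (θ : 𝕊) : tr θ ∈ Set.Ioc (-π) π := Real.Angle.toReal_mem_Ioc θ
lemma coe_tr (θ : 𝕊) : ((tr θ : ℝ) : 𝕊) = θ := Real.Angle.coe_toReal θ
lemma tr_eq_zero_iff {θ : 𝕊} : tr θ = 0 ↔ θ = 0 := Real.Angle.toReal_eq_zero_iff
lemma tr_eq_pi_iff {θ : 𝕊} : tr θ = π ↔ θ = ((π : ℝ) : 𝕊) := Real.Angle.toReal_eq_pi_iff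

-- pointwise inequalities
lemma one_sub_cos (t : ℝ) : 1 - Real.cos t = 2 * Real.sin (t/2)^2 := by
  have h2 := Real.sin_sq_add_cos_sq (t/2)
  have h3 := Real.cos_two_mul (t/2)
  have h4 : 2*(t/2) = t := by ring
  rw [h4] at h3
  nlinarith

lemma jordan {u : ℝ} (h0 : 0 ≤ u) (hu : u ≤ π) : u ≤ π * Real.sin (u/2) := by
  have hj := Real.mul_le_sin (x := u/2) (by positivity) (by linarith)
  have hπ := Real.pi_pos
  calc u = π * (2/π * (u/2)) := by field_simp
  _ ≤ π * Real.sin (u/2) := mul_le_mul_of_nonneg_left hj hπ.le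

lemma jordan_strict {u : ℝ} (h0 : 0 < u) (hu : u < π) : u < π * Real.sin (u/2) := by
  have hj := Real.mul_lt_sin (x := u/2) (by positivity) (by linarith)
  have hπ := Real.pi_pos
  calc u = π * (2/π * (u/2)) := by field_simp
  _ < π * Real.sin (u/2) := (mul_lt_mul_iff_right₀ hπ).mpr hj

lemma sin_half_abs_sq (t : ℝ) : Real.sin (|t|/2)^2 = Real.sin (t/2)^2 := by
  rcases abs_cases t with ⟨h1,_⟩|⟨h1,_⟩ <;> rw [h1]
  rw [neg_div, Real.sin_neg]; ring

lemma key_ineq {t : ℝ} (h : |t| ≤ π) : t^2 ≤ π^2/2 * (1 - Real.cos t) := by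
  rw [one_sub_cos]
  have hu := jordan (abs_nonneg t) h
  have h1 : t^2 ≤ (π * Real.sin (|t|/2))^2 := by
    rw [← sq_abs t]
    exact pow_le_pow_left₀ (abs_nonneg t) hu 2
  have h2 : (π * Real.sin (|t|/2))^2 = π^2 * Real.sin (t/2)^2 := by
    rw [mul_pow, sin_half_abs_sq]
  nlinarith

lemma key_eq {t : ℝ} (h : |t| ≤ π) (he : t^2 = π^2/2 * (1 - Real.cos t)) :
    t = 0 ∨ |t| = π := by
  rcases eq_or_lt_of_le h with heq | hlt
  · right; exact heq
  · left
    by_contra ht0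
    have h0 : 0 < |t| := abs_pos.mpr ht0
    have hs := jordan_strict h0 hlt
    have h1 : t^2 < (π * Real.sin (|t|/2))^2 := by
      rw [← sq_abs t]
      apply pow_lt_pow_left₀ hs (abs_nonneg t) (by norm_num)
    have h2 : (π * Real.sin (|t|/2))^2 = π^2 * Real.sin (t/2)^2 := by
      rw [mul_pow, sin_half_abs_sq]
    rw [one_sub_cos] at he
    nlinarith


lemma norm_eq_abs_tr (θ : 𝕊) : ‖θ‖ = |tr θ| := by
  have h2 : |tr θ| ≤ |2 * π| / 2 := by
    rw [abs_of_pos (by positivity : (0:ℝ) < 2*π)]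
    have h := tr_mem_Ioc θ
    rw [abs_le]; constructor <;> [linarith [h.1]; linarith [h.2]]
  have h3 := (AddCircle.norm_coe_eq_abs_iff (p := 2*π) (x := tr θ) (by positivity)).mpr h2
  rwa [coe_tr] at h3

lemma dist_eq_abs_tr (x y : 𝕊) : dist x y = |tr (x - y)| := by
  rw [dist_eq_norm, norm_eq_abs_tr]

lemma dist_sq_eq (x y : 𝕊) : dist x y ^ 2 = tr (x - y) ^ 2 := by
  rw [dist_eq_abs_tr, sq_abs]

lemma cos_tr (θ : 𝕊) : Real.cos (tr θ) = Real.Angle.cos θ := Real.Angle.cos_toReal θ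
lemma sin_tr (θ : 𝕊) : Real.sin (tr θ) = Real.Angle.sin θ := Real.Angle.sin_toReal θ
lemma cos_tr_coe (x : ℝ) : Real.cos (tr (x : 𝕊)) = Real.cos x := by
  rw [cos_tr]; exact Real.Angle.cos_coe x
lemma sin_tr_coe (x : ℝ) : Real.sin (tr (x : 𝕊)) = Real.sin x := by
  rw [sin_tr]; exact Real.Angle.sin_coe x

lemma cos_tr_sub (x y : 𝕊) :
    Real.cos (tr (x - y)) = Real.cos (tr x) * Real.cos (tr y) + Real.sin (tr x) * Real.sin (tr y) := by
  have h : x - y = ((tr x - tr y : ℝ) : 𝕊) := by rw [AddCircle.coe_sub, coe_tr, coe_tr]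
  rw [h, cos_tr_coe, Real.cos_sub]

lemma cos_tr_add_pi (θ : 𝕊) : Real.cos (tr (θ + ((π:ℝ) : 𝕊))) = -Real.cos (tr θ) := by
  have h : θ + ((π:ℝ) : 𝕊) = ((tr θ + π : ℝ) : 𝕊) := by rw [AddCircle.coe_add, coe_tr]
  rw [h, cos_tr_coe, Real.cos_add_pi]
lemma sin_tr_add_pi (θ : 𝕊) : Real.sin (tr (θ + ((π:ℝ) : 𝕊))) = -Real.sin (tr θ) := by
  have h : θ + ((π:ℝ) : 𝕊) = ((tr θ + π : ℝ) : 𝕊) := by rw [AddCircle.coe_add, coe_tr]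
  rw [h, sin_tr_coe, Real.sin_add_pi]

lemma continuous_cos_tr : Continuous (fun θ : 𝕊 => Real.cos (tr θ)) := by
  have h : (fun θ : 𝕊 => Real.cos (tr θ)) = Real.Angle.cos := funext fun θ => cos_tr θ
  rw [h]; exact Real.Angle.continuous_cos
lemma continuous_sin_tr : Continuous (fun θ : 𝕊 => Real.sin (tr θ)) := by
  have h : (fun θ : 𝕊 => Real.sin (tr θ)) = Real.Angle.sin := funext fun θ => sin_tr θ
  rw [h]; exact Real.Angle.continuous_sin

lemma neg_pi_coe : -(((π:ℝ)) : 𝕊) = ((π:ℝ) : 𝕊) := by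
  have h : ((π:ℝ) : 𝕊) + ((π:ℝ) : 𝕊) = 0 := by
    rw [← AddCircle.coe_add]
    have : (π + π : ℝ) = 2 * π := by ring
    rw [this, AddCircle.coe_period]
  exact neg_eq_of_add_eq_zero_left h

lemma pi_coe_ne_zero : ((π:ℝ) : 𝕊) ≠ 0 := by
  intro h
  have h1 : tr ((π:ℝ) : 𝕊) = π := tr_eq_pi_iff.mpr rfl
  rw [h, show tr (0:𝕊) = 0 from Real.Angle.toReal_zero] at h1
  exact Real.pi_ne_zero h1.symm

-- integrability of continuous functions
lemma integrable_of_continuous {X : Type*} [TopologicalSpace X] [CompactSpace X]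
    [MeasurableSpace X] [OpensMeasurableSpace X] (μ : Measure X) [IsFiniteMeasure μ]
    {f : X → ℝ} (hf : Continuous f) : Integrable f μ :=
  hf.integrable_of_hasCompactSupport (HasCompactSupport.of_compactSpace f)


section OneD

def En (ν : Measure 𝕊) : ℝ := ∫ x, ∫ y, dist x y ^ 2 ∂ν ∂ν
def Cc (ν : Measure 𝕊) : ℝ := ∫ θ, Real.cos (tr θ) ∂ν
def Sc (ν : Measure 𝕊) : ℝ := ∫ θ, Real.sin (tr θ) ∂ν
def g (p : 𝕊 × 𝕊) : ℝ := π^2/2 * (1 - Real.cos (tr (p.1 - p.2))) - dist p.1 p.2 ^ 2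

lemma continuous_costr_sub : Continuous (fun p : 𝕊 × 𝕊 => Real.cos (tr (p.1 - p.2))) :=
  continuous_cos_tr.comp (continuous_fst.sub continuous_snd)

lemma continuous_distsq : Continuous (fun p : 𝕊 × 𝕊 => dist p.1 p.2 ^ 2) :=
  (continuous_fst.dist continuous_snd).pow 2

lemma continuous_g : Continuous g :=
  (continuous_const.mul (continuous_const.sub continuous_costr_sub)).sub continuous_distsq

lemma g_nonneg (p : 𝕊 × 𝕊) : 0 ≤ g p := by
  have h1 := key_ineq (t := tr (p.1 - p.2)) (by
    have h := tr_mem_Ioc (p.1 - p.2)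
    rw [abs_le]; exact ⟨h.1.le, h.2⟩)
  have h2 := dist_sq_eq p.1 p.2
  unfold g; linarith

variable (ν : Measure 𝕊) [IsProbabilityMeasure ν]

lemma En_prod : En ν = ∫ p, dist p.1 p.2 ^ 2 ∂(ν.prod ν) :=
  (integral_prod _ (integrable_of_continuous _ continuous_distsq)).symm

lemma integrable_cos_tr : Integrable (fun θ : 𝕊 => Real.cos (tr θ)) ν :=
  integrable_of_continuous _ continuous_cos_tr
lemma integrable_sin_tr : Integrable (fun θ : 𝕊 => Real.sin (tr θ)) ν :=
  integrable_of_continuous _ continuous_sin_tr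

lemma integral_cos_sub :
    ∫ p, Real.cos (tr (p.1 - p.2)) ∂(ν.prod ν) = Cc ν ^ 2 + Sc ν ^ 2 := by
  rw [integral_prod _ (integrable_of_continuous _ continuous_costr_sub)]
  have inner : ∀ x : 𝕊, ∫ y, Real.cos (tr (x - y)) ∂ν
      = Real.cos (tr x) * Cc ν + Real.sin (tr x) * Sc ν := by
    intro x
    have hfun : (fun y : 𝕊 => Real.cos (tr (x - y)))
        = fun y => Real.cos (tr x) * Real.cos (tr y) + Real.sin (tr x) * Real.sin (tr y) :=
      funext fun y => cos_tr_sub x y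
    rw [hfun, integral_add ((integrable_cos_tr ν).const_mul _) ((integrable_sin_tr ν).const_mul _),
      integral_const_mul, integral_const_mul]
    rfl
  rw [show (fun x : 𝕊 => ∫ y, Real.cos (tr (x - y)) ∂ν)
      = fun x => Real.cos (tr x) * Cc ν + Real.sin (tr x) * Sc ν from funext inner,
    integral_add ((integrable_cos_tr ν).mul_const _) ((integrable_sin_tr ν).mul_const _),
    integral_mul_const, integral_mul_const]
  unfold Cc Sc; ring

lemma integral_g_eq :
    ∫ p, g p ∂(ν.prod ν) = π^2/2 * (1 - (Cc ν ^ 2 + Sc ν ^ 2)) - En ν := by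
  unfold g
  rw [integral_sub (integrable_of_continuous _
      (continuous_const.mul (continuous_const.sub continuous_costr_sub)) :
        Integrable (fun p : 𝕊 × 𝕊 => π^2/2 * (1 - Real.cos (tr (p.1 - p.2)))) _)
      (integrable_of_continuous _ continuous_distsq),
    integral_const_mul,
    integral_sub (integrable_const 1) (integrable_of_continuous _ continuous_costr_sub),
    integral_const, integral_cos_sub, ← En_prod]
  simp

lemma En_le : En ν ≤ π^2/2 := by
  have h1 : 0 ≤ ∫ p, g p ∂(ν.prod ν) := integral_nonneg g_nonneg
  rw [integral_g_eq] at h1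
  nlinarith [sq_nonneg (Cc ν), sq_nonneg (Sc ν), sq_nonneg π]

lemma integral_two_point (a b : ℝ≥0∞) (ha : a ≠ ⊤) (hb : b ≠ ⊤) (z w : 𝕊)
    {f : 𝕊 → ℝ} (hf : Continuous f) :
    ∫ θ, f θ ∂(a • Measure.dirac z + b • Measure.dirac w)
      = a.toReal * f z + b.toReal * f w := by
  haveI h1 : IsFiniteMeasure (a • Measure.dirac z) :=
    ⟨by simp [lt_top_iff_ne_top, ha]⟩
  haveI h2 : IsFiniteMeasure (b • Measure.dirac w) :=
    ⟨by simp [lt_top_iff_ne_top, hb]⟩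
  rw [integral_add_measure (integrable_of_continuous _ hf) (integrable_of_continuous _ hf),
    integral_smul_measure, integral_smul_measure,
    integral_dirac' f z hf.stronglyMeasurable, integral_dirac' f w hf.stronglyMeasurable]
  simp [smul_eq_mul]

lemma dist_antipodal (z : 𝕊) : dist z (z + ((π:ℝ) : 𝕊)) = π := by
  rw [dist_eq_abs_tr]
  have h : z - (z + ((π:ℝ) : 𝕊)) = -(((π:ℝ)) : 𝕊) := by abel
  rw [h, neg_pi_coe, tr_eq_pi_iff.mpr rfl, abs_of_pos Real.pi_pos]

lemma En_antipodal (z : 𝕊) :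
    En ((2⁻¹:ℝ≥0∞) • (Measure.dirac z + Measure.dirac (z + ((π:ℝ) : 𝕊)))) = π^2/2 := by
  set w := z + ((π:ℝ) : 𝕊) with hw
  have hsmul : (2⁻¹:ℝ≥0∞) • (Measure.dirac z + Measure.dirac w)
      = (2⁻¹:ℝ≥0∞) • Measure.dirac z + (2⁻¹:ℝ≥0∞) • Measure.dirac w := smul_add _ _ _
  have hzw : dist z w = π := dist_antipodal z
  have hwz : dist w z = π := by rw [dist_comm]; exact hzw
  have h2 : ((2⁻¹:ℝ≥0∞)).toReal = 1/2 := by simp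
  have hne : (2⁻¹:ℝ≥0∞) ≠ ⊤ := by simp
  unfold En
  rw [hsmul]
  have inner : ∀ x : 𝕊, ∫ y, dist x y ^ 2
        ∂((2⁻¹:ℝ≥0∞) • Measure.dirac z + (2⁻¹:ℝ≥0∞) • Measure.dirac w)
      = (1/2) * dist x z ^ 2 + (1/2) * dist x w ^ 2 := by
    intro x
    rw [integral_two_point _ _ hne hne _ _
      (by fun_prop : Continuous fun y : 𝕊 => dist x y ^ 2), h2]
  rw [show (fun x : 𝕊 => ∫ y, dist x y ^ 2
        ∂((2⁻¹:ℝ≥0∞) • Measure.dirac z + (2⁻¹:ℝ≥0∞) • Measure.dirac w))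
      = fun x => (1/2) * dist x z ^ 2 + (1/2) * dist x w ^ 2 from funext inner,
    integral_two_point _ _ hne hne _ _
      (by fun_prop : Continuous fun x : 𝕊 => 1/2 * dist x z ^ 2 + 1/2 * dist x w ^ 2),
    h2, hzw, hwz, dist_self, dist_self]
  ring

lemma measure_two_point (ν : Measure 𝕊) {z w : 𝕊} (hzw : z ≠ w)
    (h : ν (({z, w} : Set 𝕊)ᶜ) = 0) :
    ν = ν {z} • Measure.dirac z + ν {w} • Measure.dirac w := by
  have hpairm : MeasurableSet ({z, w} : Set 𝕊) :=
    (measurableSet_singleton z).union (measurableSet_singleton w)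
  ext s hs
  have hsub : ν s = ν (s ∩ {z, w}) := by
    refine le_antisymm ?_ (measure_mono inter_subset_left)
    calc ν s = ν ((s ∩ {z, w}) ∪ (s ∩ ({z, w} : Set 𝕊)ᶜ)) := by rw [inter_union_compl]
    _ ≤ ν (s ∩ {z, w}) + ν (s ∩ ({z, w} : Set 𝕊)ᶜ) := measure_union_le _ _
    _ ≤ ν (s ∩ {z, w}) + 0 :=
      add_le_add_right (le_trans (measure_mono inter_subset_right) h.le) _
    _ = ν (s ∩ {z, w}) := add_zero _
  rw [Measure.coe_add, Pi.add_apply, Measure.smul_apply, Measure.smul_apply,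
    Measure.dirac_apply' z hs, Measure.dirac_apply' w hs, hsub, smul_eq_mul, smul_eq_mul]
  by_cases hz : z ∈ s <;> by_cases hw : w ∈ s
  · have hint : s ∩ {z, w} = {z, w} := inter_eq_right.mpr (by
      rintro t (rfl | rfl) <;> simpa)
    rw [hint, show ({z, w} : Set 𝕊) = {z} ∪ {w} from rfl,
      measure_union (by simpa using hzw) (measurableSet_singleton w)]
    simp [indicator_of_mem hz, indicator_of_mem hw]
  · have hint : s ∩ {z, w} = {z} := by
      ext t; constructor
      · rintro ⟨hts, rfl | rfl⟩
        · rfl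
        · exact absurd hts hw
      · rintro rfl; exact ⟨hz, Or.inl rfl⟩
    rw [hint]
    simp [indicator_of_mem hz, indicator_of_notMem hw]
  · have hint : s ∩ {z, w} = {w} := by
      ext t; constructor
      · rintro ⟨hts, rfl | rfl⟩
        · exact absurd hts hz
        · rfl
      · rintro rfl; exact ⟨hw, Or.inr rfl⟩
    rw [hint]
    simp [indicator_of_notMem hz, indicator_of_mem hw]
  · have hint : s ∩ {z, w} = ∅ := by
      ext t; constructor
      · rintro ⟨hts, rfl | rfl⟩
        · exact absurd hts hz
        · exact absurd hts hw
      · rintro ⟨⟩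
    rw [hint]
    simp [indicator_of_notMem hz, indicator_of_notMem hw]

lemma antipodal_of_En_eq (h : En ν = π^2/2) :
    ∃ z : 𝕊, ν = (2⁻¹:ℝ≥0∞) • (Measure.dirac z + Measure.dirac (z + ((π:ℝ) : 𝕊))) := by
  have hg := integral_g_eq ν
  rw [h] at hg
  have hgnn : 0 ≤ ∫ p, g p ∂(ν.prod ν) := integral_nonneg g_nonneg
  have hpi := Real.pi_pos
  have hCS : Cc ν ^ 2 + Sc ν ^ 2 ≤ 0 := by nlinarith [mul_pos hpi hpi]
  have hC : Cc ν = 0 := pow_eq_zero_iff (two_ne_zero) |>.mp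
    (le_antisymm (by nlinarith [sq_nonneg (Sc ν)]) (sq_nonneg _))
  have hS : Sc ν = 0 := pow_eq_zero_iff (two_ne_zero) |>.mp
    (le_antisymm (by nlinarith [sq_nonneg (Cc ν)]) (sq_nonneg _))
  have hg0 : ∫ p, g p ∂(ν.prod ν) = 0 := by rw [hg, hC, hS]; ring
  have haeg : ∀ᵐ p ∂(ν.prod ν), g p = 0 := by
    have h1 := (integral_eq_zero_iff_of_nonneg g_nonneg
      (integrable_of_continuous _ continuous_g)).mp hg0
    filter_upwards [h1] with p hp using hp
  have hae2 := Measure.ae_ae_of_ae_prod haeg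
  have hneb : (MeasureTheory.ae ν).NeBot := ae_neBot.mpr (IsProbabilityMeasure.ne_zero ν)
  obtain ⟨x₀, hx₀⟩ := hae2.exists
  refine ⟨x₀, ?_⟩
  set w := x₀ + ((π:ℝ) : 𝕊) with hwdef
  have hzw : x₀ ≠ w := by
    intro hcontra
    exact pi_coe_ne_zero (left_eq_add.mp hcontra)
  have hmem : ∀ᵐ y ∂ν, y ∈ ({x₀, w} : Set 𝕊) := by
    filter_upwards [hx₀] with y hy
    have ht := tr_mem_Ioc (x₀ - y)
    have habs : |tr (x₀ - y)| ≤ π := abs_le.mpr ⟨ht.1.le, ht.2⟩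
    have heq : (tr (x₀ - y))^2 = π^2/2 * (1 - Real.cos (tr (x₀ - y))) := by
      have hd := dist_sq_eq x₀ y
      unfold g at hy
      simp only at hy
      linarith
    rcases key_eq habs heq with h0 | hpieq
    · have h1 : x₀ - y = 0 := tr_eq_zero_iff.mp h0
      have h2 : y = x₀ := (sub_eq_zero.mp h1).symm
      exact Set.mem_insert_iff.mpr (Or.inl h2)
    · have htr : tr (x₀ - y) = π := by
        rcases abs_eq (le_of_lt hpi) |>.mp hpieq with h1 | h1
        · exact h1
        · exfalso; linarith [ht.1]
      have hsub : x₀ - y = ((π:ℝ) : 𝕊) := tr_eq_pi_iff.mp htr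
      have h3 : y = x₀ - ((π:ℝ) : 𝕊) := by
        rw [eq_sub_iff_add_eq, ← eq_sub_iff_add_eq']
        exact hsub.symm
      have h4 : y = w := by
        rw [h3, sub_eq_add_neg, neg_pi_coe, hwdef]
      exact Set.mem_insert_iff.mpr (Or.inr (by rw [h4]; exact Set.mem_singleton w))
  have hcompl : ν (({x₀, w} : Set 𝕊)ᶜ) = 0 := by
    rw [ae_iff] at hmem
    exact hmem
  have hrep := measure_two_point ν hzw hcompl
  have hatop : ν {x₀} ≠ ⊤ := measure_ne_top ν _
  have hbtop : ν {w} ≠ ⊤ := measure_ne_top ν _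
  have hab1 : ν {x₀} + ν {w} = 1 := by
    have hd : ν ({x₀} ∪ {w}) = ν {x₀} + ν {w} :=
      measure_union (by simpa using hzw) (measurableSet_singleton w)
    have h1 := measure_add_measure_compl (μ := ν)
      ((measurableSet_singleton x₀).union (measurableSet_singleton w))
    rw [hd] at h1
    have h2 : ν (({x₀} ∪ {w} : Set 𝕊)ᶜ) = 0 := by rw [Set.singleton_union]; exact hcompl
    rw [h2, add_zero, measure_univ] at h1
    exact h1
  have hcw : Real.cos (tr w) = -Real.cos (tr x₀) := by rw [hwdef]; exact cos_tr_add_pi x₀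
  have hsw : Real.sin (tr w) = -Real.sin (tr x₀) := by rw [hwdef]; exact sin_tr_add_pi x₀
  have keyC := integral_two_point (ν {x₀}) (ν {w}) hatop hbtop x₀ w continuous_cos_tr
  have keyS := integral_two_point (ν {x₀}) (ν {w}) hatop hbtop x₀ w continuous_sin_tr
  rw [← hrep] at keyC keyS
  have hCval : Cc ν = ((ν {x₀}).toReal - (ν {w}).toReal) * Real.cos (tr x₀) := by
    unfold Cc
    rw [keyC, hcw]; ring
  have hSval : Sc ν = ((ν {x₀}).toReal - (ν {w}).toReal) * Real.sin (tr x₀) := by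
    unfold Sc
    rw [keyS, hsw]; ring
  have htrig := Real.sin_sq_add_cos_sq (tr x₀)
  have habr : (ν {x₀}).toReal = (ν {w}).toReal := by
    have h1 : ((ν {x₀}).toReal - (ν {w}).toReal) * Real.cos (tr x₀) = 0 := by rw [← hCval, hC]
    have h2 : ((ν {x₀}).toReal - (ν {w}).toReal) * Real.sin (tr x₀) = 0 := by rw [← hSval, hS]
    nlinarith [sq_nonneg ((ν {x₀}).toReal - (ν {w}).toReal)]
  have haeqb : ν {x₀} = ν {w} := (ENNReal.toReal_eq_toReal_iff' hatop hbtop).mp habr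
  have hbval : ν {w} = 2⁻¹ := by
    rw [haeqb] at hab1
    have h2b : 2 * ν {w} = 1 := by rw [two_mul]; exact hab1
    calc ν {w} = 2⁻¹ * (2 * ν {w}) := by
          rw [← mul_assoc, ENNReal.inv_mul_cancel two_ne_zero ENNReal.ofNat_ne_top, one_mul]
    _ = 2⁻¹ := by rw [h2b, mul_one]
  have haval : ν {x₀} = 2⁻¹ := haeqb.trans hbval
  rw [hrep, haval, hbval, smul_add]

end OneD


section TorusPart

variable {d : ℕ}

lemma tdist_sq (x y : Torus d) : tdist x y ^ 2 = ∑ i, dist (x i) (y i) ^ 2 :=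
  Real.sq_sqrt (Finset.sum_nonneg fun _ _ => sq_nonneg _)

lemma continuous_tdistsq :
    Continuous (fun p : Torus d × Torus d => tdist p.1 p.2 ^ 2) := by
  have h : (fun p : Torus d × Torus d => tdist p.1 p.2 ^ 2)
      = fun p => ∑ i, dist (p.1 i) (p.2 i) ^ 2 := funext fun p => tdist_sq _ _
  rw [h]
  exact continuous_finset_sum _ fun i _ => by fun_prop

lemma energy_decomp (μ : Measure (Torus d)) [IsProbabilityMeasure μ] :
    ∫ x, ∫ y, tdist x y ^ 2 ∂μ ∂μ = ∑ i, En (Measure.map (fun x => x i) μ) := by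
  have hint : Integrable (fun p : Torus d × Torus d => tdist p.1 p.2 ^ 2) (μ.prod μ) :=
    integrable_of_continuous _ continuous_tdistsq
  rw [← integral_prod _ hint,
    show (fun p : Torus d × Torus d => tdist p.1 p.2 ^ 2)
      = fun p => ∑ i, dist (p.1 i) (p.2 i) ^ 2 from funext fun p => tdist_sq _ _,
    integral_finset_sum _ (fun i _ => integrable_of_continuous _ (by fun_prop))]
  refine Finset.sum_congr rfl fun i _ => ?_
  have hφ : Measurable (fun x : Torus d => x i) := measurable_pi_apply i
  haveI : IsProbabilityMeasure (Measure.map (fun x : Torus d => x i) μ) :=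
    Measure.isProbabilityMeasure_map hφ.aemeasurable
  rw [En_prod, Measure.map_prod_map _ _ hφ hφ,
    integral_map (hφ.prodMap hφ).aemeasurable continuous_distsq.aestronglyMeasurable]
  rfl

lemma energy_bound (ν : Measure (Torus d)) [IsProbabilityMeasure ν] :
    -((d : ℝ) * (π ^ 2 / 2)) ≤ negSqEnergy ν := by
  unfold negSqEnergy
  rw [energy_decomp ν]
  have h1 : ∑ i : Fin d, En (Measure.map (fun x => x i) ν) ≤ (d : ℝ) * (π ^ 2 / 2) := by
    calc ∑ i : Fin d, En (Measure.map (fun x => x i) ν) ≤ ∑ _i : Fin d, π ^ 2 / 2 := by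
          refine Finset.sum_le_sum fun i _ => ?_
          haveI : IsProbabilityMeasure (Measure.map (fun x : Torus d => x i) ν) :=
            Measure.isProbabilityMeasure_map (measurable_pi_apply i).aemeasurable
          exact En_le _
    _ = (d : ℝ) * (π ^ 2 / 2) := by simp [Finset.sum_const, Finset.card_univ]
  linarith

def ν₀ (d : ℕ) : Measure (Torus d) :=
  (2⁻¹ : ℝ≥0∞) • (Measure.dirac (fun _ => (0 : 𝕊)) + Measure.dirac (fun _ => ((π:ℝ) : 𝕊)))

instance (d : ℕ) : IsProbabilityMeasure (ν₀ d) := by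
  constructor
  unfold ν₀
  simp only [Measure.smul_apply, Measure.coe_add, Pi.add_apply, measure_univ, smul_eq_mul]
  rw [one_add_one_eq_two, ENNReal.inv_mul_cancel two_ne_zero ENNReal.ofNat_ne_top]

lemma map_ν₀ (d : ℕ) (i : Fin d) :
    Measure.map (fun x => x i) (ν₀ d)
      = (2⁻¹ : ℝ≥0∞) • (Measure.dirac ((0 : 𝕊) )
          + Measure.dirac (((0 : 𝕊)) + ((π:ℝ) : 𝕊))) := by
  have hφ : Measurable (fun x : Torus d => x i) := measurable_pi_apply i
  unfold ν₀
  rw [Measure.map_smul, Measure.map_add _ _ hφ, Measure.map_dirac' hφ, Measure.map_dirac' hφ,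
    zero_add]

lemma energy_ν₀ (d : ℕ) : negSqEnergy (ν₀ d) = -((d : ℝ) * (π ^ 2 / 2)) := by
  unfold negSqEnergy
  rw [energy_decomp (ν₀ d)]
  have h1 : ∀ i : Fin d, En (Measure.map (fun x => x i) (ν₀ d)) = π ^ 2 / 2 := by
    intro i
    rw [map_ν₀ d i]
    exact En_antipodal _
  rw [Finset.sum_congr rfl fun i _ => h1 i]
  simp [Finset.sum_const, Finset.card_univ]

end TorusPart

end RieszAux

/-- On the flat `d`-torus, a probability measure minimizes the Riesz energy for `s = −2`
iff each of its coordinate projections to the circle is the average of two Dirac masses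
at a pair of antipodal points. -/
theorem riesz_neg_two_minimizers_on_torus
    (d : ℕ) (hd : 1 ≤ d) (μ : Measure (Torus d)) [IsProbabilityMeasure μ] :
    (∀ ν : Measure (Torus d), IsProbabilityMeasure ν → negSqEnergy μ ≤ negSqEnergy ν) ↔
      (∀ i : Fin d, ∃ z : AddCircle (2 * Real.pi),
        Measure.map (fun x => x i) μ =
          (2⁻¹ : ℝ≥0∞) • (Measure.dirac z +
            Measure.dirac (z + (Real.pi : AddCircle (2 * Real.pi))))) := by
  set π := Real.pi
  constructor
  · intro hmin i
    have hb := hmin (RieszAux.ν₀ d) inferInstance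
    rw [RieszAux.energy_ν₀ d] at hb
    have hsum : (d : ℝ) * (π ^ 2 / 2)
        ≤ ∑ j : Fin d, RieszAux.En (Measure.map (fun x => x j) μ) := by
      have := RieszAux.energy_decomp μ
      unfold negSqEnergy at hb
      rw [this] at hb
      linarith
    haveI hpm : ∀ j : Fin d, IsProbabilityMeasure (Measure.map (fun x : Torus d => x j) μ) :=
      fun j => Measure.isProbabilityMeasure_map (measurable_pi_apply j).aemeasurable
    have hle : ∀ j : Fin d, RieszAux.En (Measure.map (fun x => x j) μ) ≤ π ^ 2 / 2 :=
      fun j => RieszAux.En_le _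
    have heq : RieszAux.En (Measure.map (fun x => x i) μ) = π ^ 2 / 2 := by
      by_contra hne
      have hlt : RieszAux.En (Measure.map (fun x => x i) μ) < π ^ 2 / 2 :=
        lt_of_le_of_ne (hle i) hne
      have hstrict : ∑ j : Fin d, RieszAux.En (Measure.map (fun x => x j) μ)
          < ∑ _j : Fin d, π ^ 2 / 2 :=
        Finset.sum_lt_sum (fun j _ => hle j) ⟨i, Finset.mem_univ i, hlt⟩
      rw [Finset.sum_const, Finset.card_univ, Fintype.card_fin, nsmul_eq_mul] at hstrict
      linarith
    exact RieszAux.antipodal_of_En_eq _ heq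
  · intro hant ν hν
    have hμ : negSqEnergy μ = -((d : ℝ) * (π ^ 2 / 2)) := by
      unfold negSqEnergy
      rw [RieszAux.energy_decomp μ]
      have h1 : ∀ i : Fin d, RieszAux.En (Measure.map (fun x => x i) μ) = π ^ 2 / 2 := by
        intro i
        obtain ⟨z, hz⟩ := hant i
        rw [hz]
        exact RieszAux.En_antipodal z
      rw [Finset.sum_congr rfl fun i _ => h1 i]
      simp [Finset.sum_const, Finset.card_univ]
    rw [hμ]
    exact RieszAux.energy_bound ν

end
end
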